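/- arXiv:2105.04202 — 3 statements merged into one kernel-verified Lean document; each statement's English description precedes it below -/
import Mathlib

section
/- Let μ > 0, γ > 0, σ ≥ 1, T_f > 0 and constants C_{γ,0}, C_{μ,0} > 0 be given. Then there exists a constant C > 0, depending only on μ, γ, σ, C_{γ,0}, C_{μ,0} and T_f (but not on ε), such that for every ε ∈ (0,1) the following holds: if ψ is a solution of the AL lattice on [0,T_f] and φ is a solution of the DNLS lattice with power nonlinearity on [0,T_f] with identical initial data φ(0) = ψ(0) satisfying ‖φ(0)‖_{ℓ²} ≤ C_{γ,0} ε and ∑_{n∈ℤ} ln(1 + μ|ψ_n(0)|²) ≤ ln(1 + (C_{μ,0} ε)²), then sup_{n∈ℤ} |ψ_n(t) − φ_n(t)| ≤ C ε³ for every t ∈ [0,T_f]. -/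
set_option maxHeartbeats 1000000

noncomputable section

open Set

/-- The sequence space ℓ²(ℤ,ℂ). -/
abbrev Seq2 := lp (fun _ : ℤ => ℂ) 2


/-- `ψ` is a solution of the Ablowitz–Ladik (AL) lattice (κ = ν = 1) on `[0,Tf]`:
a continuously differentiable curve into ℓ²(ℤ,ℂ) satisfying
`i dψ_n/dt = (ψ_{n+1} − 2ψ_n + ψ_{n−1}) + μ|ψ_n|²(ψ_{n+1} + ψ_{n−1})` componentwise. -/
def IsALSolution (μ Tf : ℝ) (ψ : ℝ → Seq2) : Prop :=
  ∃ ψdot : ℝ → Seq2, ContinuousOn ψdot (Icc 0 Tf) ∧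
    ∀ t ∈ Icc (0:ℝ) Tf,
      HasDerivWithinAt ψ (ψdot t) (Icc 0 Tf) t ∧
      ∀ n : ℤ, Complex.I * ψdot t n =
        (ψ t (n+1) - 2 * ψ t n + ψ t (n-1))
          + (μ : ℂ) * ((‖ψ t n‖)^2 : ℝ) * (ψ t (n+1) + ψ t (n-1))


/-- `φ` is a solution of the DNLS lattice with power nonlinearity on `[0,Tf]`:
a continuously differentiable curve into ℓ²(ℤ,ℂ) satisfying
`i dφ_n/dt = (φ_{n+1} − 2φ_n + φ_{n−1}) + γ|φ_n|^{2σ}φ_n` componentwise. -/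
def IsDNLSSolution (γ σ Tf : ℝ) (φ : ℝ → Seq2) : Prop :=
  ∃ φdot : ℝ → Seq2, ContinuousOn φdot (Icc 0 Tf) ∧
    ∀ t ∈ Icc (0:ℝ) Tf,
      HasDerivWithinAt φ (φdot t) (Icc 0 Tf) t ∧
      ∀ n : ℤ, Complex.I * φdot t n =
        (φ t (n+1) - 2 * φ t n + φ t (n-1))
          + (γ : ℂ) * ((‖φ t n‖) ^ (2*σ) : ℝ) * φ t n

namespace ALaux

open Filter
open scoped ENNReal NNReal Topology

/-! ### basic ℓ² facts -/

/-- evaluation as a continuous ℝ-linear map -/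
def ev (n : ℤ) : Seq2 →L[ℝ] ℂ :=
  LinearMap.mkContinuous
    { toFun := fun f => f n
      map_add' := fun f g => by simp [lp.coeFn_add]
      map_smul' := fun c f => by simp [lp.coeFn_smul] }
    1 (fun f => by
      rw [one_mul]; exact lp.norm_apply_le_norm (by norm_num) f n)

@[simp] lemma ev_apply (n : ℤ) (f : Seq2) : ev n f = f n := rfl

lemma apply_le_norm (f : Seq2) (n : ℤ) : ‖f n‖ ≤ ‖f‖ :=
  lp.norm_apply_le_norm (by norm_num) f n

lemma sq_summable (f : Seq2) : Summable (fun n => ‖f n‖ ^ 2) := by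
  have := (lp.memℓp f).summable (p := 2) (by norm_num)
  convert this using 2 with n
  rw [show ((2:ℝ≥0∞).toReal) = (2:ℝ) by norm_num, ← Real.rpow_natCast ‖f n‖ 2]
  norm_num

lemma norm_sq_eq (f : Seq2) : ‖f‖ ^ 2 = ∑' n, ‖f n‖ ^ 2 := by
  have := lp.norm_rpow_eq_tsum (p := 2) (by norm_num) f
  rw [show ((2:ℝ≥0∞).toReal) = (2:ℝ) by norm_num] at this
  rw [← Real.rpow_natCast ‖f‖ 2]
  rw [show ((2:ℕ):ℝ) = (2:ℝ) by norm_num, this]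
  congr 1; ext n
  rw [← Real.rpow_natCast ‖f n‖ 2]; norm_num

abbrev RSeq2 := lp (fun _ : ℤ => ℝ) 2

lemma rsq_summable (f : RSeq2) : Summable (fun n => ‖f n‖ ^ 2) := by
  have := (lp.memℓp f).summable (p := 2) (by norm_num)
  convert this using 2 with n
  rw [show ((2:ℝ≥0∞).toReal) = (2:ℝ) by norm_num, ← Real.rpow_natCast ‖f n‖ 2]
  norm_num

lemma rnorm_sq_eq (f : RSeq2) : ‖f‖ ^ 2 = ∑' n, ‖f n‖ ^ 2 := by
  have := lp.norm_rpow_eq_tsum (p := 2) (by norm_num) f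
  rw [show ((2:ℝ≥0∞).toReal) = (2:ℝ) by norm_num] at this
  rw [← Real.rpow_natCast ‖f‖ 2]
  rw [show ((2:ℕ):ℝ) = (2:ℝ) by norm_num, this]
  congr 1; ext n
  rw [← Real.rpow_natCast ‖f n‖ 2]; norm_num

/-- abs-of-shift: `n ↦ ‖x (n+k)‖` as an element of real ℓ². -/
def aS (x : Seq2) (k : ℤ) : RSeq2 :=
  ⟨fun n => ‖x (n + k)‖, by
    apply memℓp_gen (p := 2)
    have h := sq_summable x
    have h2 : Summable (fun n : ℤ => ‖x (n + k)‖ ^ 2) :=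
      ((Equiv.addRight k).summable_iff (f := fun n : ℤ => ‖x n‖ ^ 2)).2 h
    convert h2 using 2 with n
    rw [show ((2:ℝ≥0∞).toReal) = (2:ℝ) by norm_num]
    rw [show ‖‖x (n + k)‖‖ = ‖x (n+k)‖ from abs_of_nonneg (norm_nonneg _)]
    rw [← Real.rpow_natCast (‖x (n + k)‖) 2]
    norm_num⟩

@[simp] lemma aS_apply (x : Seq2) (k n : ℤ) : (aS x k : ∀ _ : ℤ, ℝ) n = ‖x (n + k)‖ := rfl

lemma aS_norm (x : Seq2) (k : ℤ) : ‖aS x k‖ = ‖x‖ := by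
  have h1 : ‖aS x k‖ ^ 2 = ‖x‖ ^ 2 := by
    rw [rnorm_sq_eq, norm_sq_eq]
    rw [show (fun n : ℤ => ‖(aS x k) n‖ ^ 2) = fun n : ℤ => ‖x (n+k)‖ ^ 2 by
      funext n; rw [aS_apply, Real.norm_eq_abs, abs_of_nonneg (norm_nonneg _)]]
    exact (Equiv.addRight k).tsum_eq (f := fun n : ℤ => ‖x n‖ ^ 2)
  exact (pow_left_inj₀ (norm_nonneg _) (norm_nonneg _) (two_ne_zero)).1 h1

lemma norm_le_of_pointwise (v : Seq2) (Z : RSeq2) (h : ∀ n, ‖v n‖ ≤ Z n) : ‖v‖ ≤ ‖Z‖ := by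
  have h2 : ‖v‖ ^ 2 ≤ ‖Z‖ ^ 2 := by
    rw [norm_sq_eq, rnorm_sq_eq]
    apply Summable.tsum_le_tsum _ (sq_summable v) (rsq_summable Z)
    intro n
    have hn : 0 ≤ Z n := le_trans (norm_nonneg _) (h n)
    have hz : ‖Z n‖ = Z n := by rw [Real.norm_eq_abs, abs_of_nonneg hn]
    rw [hz]
    exact pow_le_pow_left₀ (norm_nonneg _) (h n) 2
  exact (pow_le_pow_iff_left₀ (norm_nonneg _) (norm_nonneg _) two_ne_zero).1 h2

/-! ### telescoping and limits -/

lemma flip_im (a b : ℂ) : ((starRingEnd ℂ) a * b).im = -(((starRingEnd ℂ) b) * a).im := by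
  simp [Complex.mul_im]; ring

lemma tele (q : ℤ → ℝ) (N : ℕ) :
    ∑ n ∈ Finset.Icc (-(N:ℤ)) N, (q n - q (n-1)) = q N - q (-(N:ℤ)-1) := by
  induction N with
  | zero => simp
  | succ N ih =>
    have hset : Finset.Icc (-((N:ℤ)+1)) ((N:ℤ)+1)
        = insert (-(N:ℤ)-1) (insert ((N:ℤ)+1) (Finset.Icc (-(N:ℤ)) N)) := by
      ext x; simp only [Finset.mem_Icc, Finset.mem_insert]; omega
    push_cast
    rw [hset, Finset.sum_insert (by simp only [Finset.mem_insert, Finset.mem_Icc]; omega),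
      Finset.sum_insert (by simp only [Finset.mem_Icc]; omega), ih]
    have e1 : ((N:ℤ)+1) - 1 = (N:ℤ) := by ring
    ring_nf

lemma tendsto_sum_Icc (f : ℤ → ℝ) (hf : Summable f) :
    Filter.Tendsto (fun N : ℕ => ∑ n ∈ Finset.Icc (-(N:ℤ)) N, f n)
      Filter.atTop (nhds (∑' n, f n)) := by
  have h1 : Filter.Tendsto (fun N : ℕ => Finset.Icc (-(N:ℤ)) N) Filter.atTop Filter.atTop := by
    apply Filter.tendsto_atTop_finset_of_monotone
    · intro a b hab
      exact Finset.Icc_subset_Icc (by omega) (by exact_mod_cast hab)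
    · intro x
      exact ⟨x.natAbs, by simp only [Finset.mem_Icc]; omega⟩
  exact (hf.hasSum.comp h1)

/-- component evaluation is continuous along a continuous curve -/
lemma cont_eval {Tf : ℝ} {u : ℝ → Seq2} (hu : ContinuousOn u (Icc 0 Tf)) (m : ℤ) :
    ContinuousOn (fun s => u s m) (Icc 0 Tf) := by
  have : (fun s => u s m) = (fun s => ev m (u s)) := by funext s; simp
  rw [this]
  exact (ev m).continuous.comp_continuousOn hu

lemma cont_q {Tf : ℝ} {u : ℝ → Seq2} (hu : ContinuousOn u (Icc 0 Tf)) (m : ℤ) :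
    ContinuousOn (fun s => ((starRingEnd ℂ) (u s m) * (u s (m+1))).im) (Icc 0 Tf) := by
  apply Complex.continuous_im.comp_continuousOn
  exact ((continuous_star.comp_continuousOn (cont_eval hu m)).mul (cont_eval hu (m+1)))

/-- vanishing of components along an injective index sequence -/
lemma tendsto_comp_zero (x : Seq2) {j : ℕ → ℤ} (hj : Function.Injective j) :
    Tendsto (fun N => ‖x (j N)‖) atTop (𝓝 0) := by
  have h1 : Tendsto (fun m : ℤ => ‖x m‖ ^ 2) cofinite (𝓝 0) :=
    (sq_summable x).tendsto_cofinite_zero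
  have h2 : Tendsto j atTop cofinite := by
    rw [← Nat.cofinite_eq_atTop]
    exact hj.tendsto_cofinite
  have h3 : Tendsto (fun N => ‖x (j N)‖ ^ 2) atTop (𝓝 0) := h1.comp h2
  have h4 := (Real.continuous_sqrt.tendsto 0).comp h3
  simp only [Function.comp_def, Real.sqrt_zero] at h4
  convert h4 using 2 with N
  rw [Real.sqrt_sq (norm_nonneg _)]

/-! ### the conservation lemma -/

/-- Conservation lemma: if each `g · n` has derivative
`c * Im(conj u_n (u_{n+1} + u_{n-1}))` then `∑' g t` is conserved. -/
lemma conserve (Tf c : ℝ) (u : ℝ → Seq2)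
    (hcont_u : ContinuousOn u (Icc 0 Tf))
    (g : ℝ → ℤ → ℝ)
    (hg : ∀ n : ℤ, ∀ t ∈ Icc (0:ℝ) Tf,
      HasDerivWithinAt (fun s => g s n)
        (c * ((starRingEnd ℂ) (u t n) * (u t (n+1) + u t (n-1))).im) (Icc 0 Tf) t)
    (hsum : ∀ t ∈ Icc (0:ℝ) Tf, Summable (g t)) :
    ∀ t ∈ Icc (0:ℝ) Tf, ∑' n, g t n = ∑' n, g 0 n := by
  intro t ht
  have hTf : (0:ℝ) ≤ Tf := le_trans ht.1 ht.2
  have h0 : (0:ℝ) ∈ Icc (0:ℝ) Tf := ⟨le_refl _, hTf⟩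
  set q : ℝ → ℤ → ℝ := fun s m => ((starRingEnd ℂ) (u s m) * (u s (m+1))).im with hq
  set G : ℕ → ℝ → ℝ := fun N s => c * (q s N - q s (-(N:ℤ)-1)) with hG
  have hterm : ∀ (n : ℤ) (s : ℝ),
      c * ((starRingEnd ℂ) (u s n) * (u s (n+1) + u s (n-1))).im = c * (q s n - q s (n-1)) := by
    intro n s
    have h1 : ((starRingEnd ℂ) (u s n) * (u s (n+1) + u s (n-1))).im
        = q s n + ((starRingEnd ℂ) (u s n) * (u s (n-1))).im := by
      simp [hq, mul_add]
    have h2 : ((starRingEnd ℂ) (u s n) * (u s (n-1))).im = - q s (n-1) := by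
      rw [flip_im]
      have e : (n - 1) + 1 = n := by ring
      simp only [hq]
      rw [e]
    rw [h1, h2]; ring
  set F : ℕ → ℝ → ℝ := fun N s => ∑ n ∈ Finset.Icc (-(N:ℤ)) N, g s n with hF
  have hFderiv : ∀ N : ℕ, ∀ s ∈ Icc (0:ℝ) Tf,
      HasDerivWithinAt (F N) (G N s) (Icc 0 Tf) s := by
    intro N s hs
    have h1 : HasDerivWithinAt (F N)
        (∑ n ∈ Finset.Icc (-(N:ℤ)) N,
          c * ((starRingEnd ℂ) (u s n) * (u s (n+1) + u s (n-1))).im) (Icc 0 Tf) s := by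
      show HasDerivWithinAt (fun s => ∑ n ∈ Finset.Icc (-(N:ℤ)) N, g s n) _ _ _
      apply HasDerivWithinAt.fun_sum
      intro n _
      exact hg n s hs
    convert h1 using 1
    rw [Finset.sum_congr rfl (fun n _ => hterm n s)]
    rw [hG]
    simp only
    rw [← Finset.mul_sum, tele (q s) N]
  have hFTC : ∀ N : ℕ, ∫ s in (0:ℝ)..t, G N s = F N t - F N 0 := by
    intro N
    apply intervalIntegral.integral_eq_sub_of_hasDeriv_right_of_le ht.1
    · intro s hs
      exact ((hFderiv N s ⟨hs.1, le_trans hs.2 ht.2⟩).continuousWithinAt).mono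
        (Icc_subset_Icc le_rfl ht.2)
    · intro x hx
      have hxmem : x ∈ Icc (0:ℝ) Tf := ⟨le_of_lt hx.1, le_trans (le_of_lt hx.2) ht.2⟩
      have hnb : Icc (0:ℝ) Tf ∈ 𝓝 x :=
        Icc_mem_nhds hx.1 (lt_of_lt_of_le hx.2 ht.2)
      exact ((hFderiv N x hxmem).hasDerivAt hnb).hasDerivWithinAt
    · apply ContinuousOn.intervalIntegrable
      rw [uIcc_of_le ht.1]
      have : ContinuousOn (G N) (Icc 0 Tf) := by
        apply ContinuousOn.mul continuousOn_const
        exact (cont_q hcont_u _).sub (cont_q hcont_u _)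
      exact this.mono (Icc_subset_Icc le_rfl ht.2)
  obtain ⟨M, hM⟩ : ∃ M, ∀ s ∈ Icc (0:ℝ) Tf, ‖u s‖ ≤ M :=
    isCompact_Icc.exists_bound_of_continuousOn hcont_u
  have hM0 : 0 ≤ M := le_trans (norm_nonneg _) (hM 0 h0)
  have hqbound : ∀ s ∈ Icc (0:ℝ) Tf, ∀ m : ℤ, |q s m| ≤ M * M := by
    intro s hs m
    have h1 : |q s m| ≤ ‖(starRingEnd ℂ) (u s m) * (u s (m+1))‖ := by
      exact Complex.abs_im_le_norm _
    rw [norm_mul, RCLike.norm_conj] at h1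
    exact le_trans h1 (mul_le_mul (le_trans (apply_le_norm _ _) (hM s hs))
      (le_trans (apply_le_norm _ _) (hM s hs)) (norm_nonneg _) hM0)
  have hint0 : Tendsto (fun N : ℕ => ∫ s in (0:ℝ)..t, G N s) atTop
      (𝓝 (∫ s in (0:ℝ)..t, (0:ℝ))) := by
    apply intervalIntegral.tendsto_integral_filter_of_dominated_convergence
      (fun _ => |c| * (M * M + M * M))
    · apply Filter.Eventually.of_forall
      intro N
      apply ContinuousOn.aestronglyMeasurable _ measurableSet_uIoc
      have : ContinuousOn (G N) (Icc 0 Tf) := by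
        apply ContinuousOn.mul continuousOn_const
        exact (cont_q hcont_u _).sub (cont_q hcont_u _)
      apply this.mono
      rw [uIoc_of_le ht.1]
      exact fun x hx => ⟨le_of_lt hx.1, le_trans hx.2 ht.2⟩
    · apply Filter.Eventually.of_forall
      intro N
      apply Filter.Eventually.of_forall
      intro s hs
      rw [uIoc_of_le ht.1] at hs
      have hsmem : s ∈ Icc (0:ℝ) Tf := ⟨le_of_lt hs.1, le_trans hs.2 ht.2⟩
      rw [hG]
      simp only [Real.norm_eq_abs, abs_mul]
      apply mul_le_mul_of_nonneg_left _ (abs_nonneg c)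
      calc |q s N - q s (-(N:ℤ)-1)| ≤ |q s N| + |q s (-(N:ℤ)-1)| := abs_sub _ _
        _ ≤ M * M + M * M := add_le_add (hqbound s hsmem _) (hqbound s hsmem _)
    · exact intervalIntegrable_const
    · apply Filter.Eventually.of_forall
      intro s hs
      rw [uIoc_of_le ht.1] at hs
      have hsmem : s ∈ Icc (0:ℝ) Tf := ⟨le_of_lt hs.1, le_trans hs.2 ht.2⟩
      have hq1 : Tendsto (fun N : ℕ => q s (N:ℤ)) atTop (𝓝 0) := by
        have hb : ∀ N : ℕ, ‖q s (N:ℤ)‖ ≤ M * ‖u s ((N:ℤ)+1)‖ := by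
          intro N
          have h1 : ‖q s (N:ℤ)‖ ≤ ‖u s (N:ℤ)‖ * ‖u s ((N:ℤ)+1)‖ := by
            rw [Real.norm_eq_abs]
            calc |q s (N:ℤ)| ≤ ‖(starRingEnd ℂ) (u s (N:ℤ)) * (u s ((N:ℤ)+1))‖ := by
                  exact Complex.abs_im_le_norm _
              _ = ‖u s (N:ℤ)‖ * ‖u s ((N:ℤ)+1)‖ := by rw [norm_mul, RCLike.norm_conj]
          exact le_trans h1 (mul_le_mul_of_nonneg_right
            (le_trans (apply_le_norm _ _) (hM s hsmem)) (norm_nonneg _))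
        have htd : Tendsto (fun N : ℕ => M * ‖u s ((N:ℤ)+1)‖) atTop (𝓝 0) := by
          have := tendsto_comp_zero (u s) (j := fun N : ℕ => (N:ℤ)+1)
            (fun a b h => by simp at h; omega)
          simpa using this.const_mul M
        exact squeeze_zero_norm hb htd
      have hq2 : Tendsto (fun N : ℕ => q s (-(N:ℤ)-1)) atTop (𝓝 0) := by
        have hb : ∀ N : ℕ, ‖q s (-(N:ℤ)-1)‖ ≤ M * ‖u s (-(N:ℤ))‖ := by
          intro N
          have h1 : ‖q s (-(N:ℤ)-1)‖ ≤ ‖u s (-(N:ℤ)-1)‖ * ‖u s (-(N:ℤ)-1+1)‖ := by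
            rw [Real.norm_eq_abs]
            calc |q s (-(N:ℤ)-1)| ≤ ‖(starRingEnd ℂ) (u s (-(N:ℤ)-1)) * (u s (-(N:ℤ)-1+1))‖ := by
                  exact Complex.abs_im_le_norm _
              _ = _ := by rw [norm_mul, RCLike.norm_conj]
          have h2 : (-(N:ℤ)-1+1) = -(N:ℤ) := by ring
          rw [h2] at h1
          exact le_trans h1 (mul_le_mul_of_nonneg_right
            (le_trans (apply_le_norm _ _) (hM s hsmem)) (norm_nonneg _))
        have htd : Tendsto (fun N : ℕ => M * ‖u s (-(N:ℤ))‖) atTop (𝓝 0) := by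
          have := tendsto_comp_zero (u s) (j := fun N : ℕ => -(N:ℤ))
            (fun a b h => by simp at h; omega)
          simpa using this.const_mul M
        exact squeeze_zero_norm hb htd
      have : Tendsto (fun N : ℕ => G N s) atTop (𝓝 (c * (0 - 0))) :=
        (Tendsto.sub hq1 hq2).const_mul c
      simpa using this
  have hlim : Tendsto (fun N : ℕ => F N t - F N 0) atTop
      (𝓝 ((∑' n, g t n) - ∑' n, g 0 n)) :=
    (tendsto_sum_Icc (g t) (hsum t ht)).sub (tendsto_sum_Icc (g 0) (hsum 0 h0))
  have hlim2 : Tendsto (fun N : ℕ => F N t - F N 0) atTop (𝓝 0) := by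
    have : (fun N : ℕ => F N t - F N 0) = fun N => ∫ s in (0:ℝ)..t, G N s := by
      funext N; rw [hFTC N]
    rw [this]
    simpa using hint0
  have := tendsto_nhds_unique hlim hlim2
  linarith

/-! ### complex-arithmetic helpers -/

/-- derivative of `‖z(·)‖²` -/
lemma hasDeriv_normSq {z : ℝ → ℂ} {z' : ℂ} {s : Set ℝ} {t : ℝ}
    (hz : HasDerivWithinAt z z' s t) :
    HasDerivWithinAt (fun s => ‖z s‖ ^ 2) (2 * ((starRingEnd ℂ) (z t) * z').re) s t := by
  have hre : HasDerivWithinAt (fun s => (z s).re) z'.re s t :=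
    Complex.reCLM.hasFDerivAt.comp_hasDerivWithinAt t hz
  have him : HasDerivWithinAt (fun s => (z s).im) z'.im s t :=
    Complex.imCLM.hasFDerivAt.comp_hasDerivWithinAt t hz
  have h := (hre.fun_mul hre).fun_add (him.fun_mul him)
  have hfe : (fun s => (z s).re * (z s).re + (z s).im * (z s).im) = fun s => ‖z s‖ ^ 2 := by
    funext s
    rw [Complex.sq_norm, Complex.normSq_apply]
  rw [hfe] at h
  refine h.congr_deriv ?_
  simp [Complex.mul_re, Complex.conj_re, Complex.conj_im]
  ring

lemma solve_I (z' E : ℂ) (h : Complex.I * z' = E) : z' = -Complex.I * E := by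
  rw [← h]; ring_nf; rw [Complex.I_sq]; ring

lemma re_conj_neg_I (z E : ℂ) : ((starRingEnd ℂ) z * (-Complex.I * E)).re
    = ((starRingEnd ℂ) z * E).im := by
  simp [Complex.mul_re, Complex.mul_im]
  ring

lemma alg_AL (z zp zm : ℂ) (a : ℝ) :
    ((starRingEnd ℂ) z * ((zp - 2*z + zm) + (a:ℂ) * (zp + zm))).im
      = (1 + a) * ((starRingEnd ℂ) z * (zp + zm)).im := by
  simp only [Complex.mul_im, Complex.mul_re, Complex.add_im, Complex.add_re, Complex.sub_im,
    Complex.sub_re, Complex.conj_re, Complex.conj_im, Complex.ofReal_re, Complex.ofReal_im,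
    Complex.re_ofNat, Complex.im_ofNat]
  ring

lemma alg_DNLS (z zp zm : ℂ) (r : ℝ) :
    ((starRingEnd ℂ) z * ((zp - 2*z + zm) + (r:ℂ) * z)).im
      = ((starRingEnd ℂ) z * (zp + zm)).im := by
  simp only [Complex.mul_im, Complex.mul_re, Complex.add_im, Complex.add_re, Complex.sub_im,
    Complex.sub_re, Complex.conj_re, Complex.conj_im, Complex.ofReal_re, Complex.ofReal_im,
    Complex.re_ofNat, Complex.im_ofNat]
  ring

/-- concavity of the logarithm -/
lemma log_concave_bound {x B : ℝ} (hx : 0 ≤ x) (hxB : x ≤ B) (hB : 0 < B) :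
    x * Real.log (1 + B) ≤ B * Real.log (1 + x) := by
  have hcc := strictConcaveOn_log_Ioi.concaveOn
  have h1 : (1:ℝ) ∈ Ioi (0:ℝ) := by norm_num
  have h2 : (1+B) ∈ Ioi (0:ℝ) := by simp; linarith
  have ha : 0 ≤ 1 - x/B := by
    have : x/B ≤ 1 := (div_le_one hB).2 hxB
    linarith
  have hb : 0 ≤ x/B := div_nonneg hx hB.le
  have hab : (1 - x/B) + x/B = 1 := by ring
  have := hcc.2 h1 h2 ha hb hab
  simp only [smul_eq_mul, Real.log_one, mul_one] at this
  have heq : 1 - x/B + x/B * (1+B) = 1 + x := by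
    field_simp
    ring
  rw [heq] at this
  have h3 : x/B * Real.log (1+B) ≤ Real.log (1+x) := by linarith
  calc x * Real.log (1+B) = B * (x/B * Real.log (1+B)) := by
        rw [show B * (x/B * Real.log (1+B)) = (B * (x/B)) * Real.log (1+B) by ring,
          mul_div_cancel₀ x hB.ne']
    _ ≤ B * Real.log (1+x) := by
        apply mul_le_mul_of_nonneg_left h3 hB.le

end ALaux

open ALaux Filter
open scoped Topology

/-- Closeness of the AL and DNLS (power nonlinearity) solutions in the ℓ∞-metric
for identical initial data. -/
theorem al_dnls_closeness_linfty (μ γ σ Tf Cγ₀ Cμ₀ : ℝ)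
    (hμ : 0 < μ) (hγ : 0 < γ) (hσ : 1 ≤ σ) (hTf : 0 < Tf)
    (hCγ₀ : 0 < Cγ₀) (hCμ₀ : 0 < Cμ₀) :
    ∃ C : ℝ, 0 < C ∧
      ∀ ε : ℝ, 0 < ε → ε < 1 →
        ∀ ψ φ : ℝ → Seq2, IsALSolution μ Tf ψ → IsDNLSSolution γ σ Tf φ →
          φ 0 = ψ 0 →
          ‖φ 0‖ ≤ Cγ₀ * ε →
          (∑' n : ℤ, Real.log (1 + μ * (‖ψ 0 n‖)^2))
            ≤ Real.log (1 + (Cμ₀ * ε)^2) →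
          ∀ t ∈ Icc (0:ℝ) Tf, ∀ n : ℤ,
            ‖ψ t n - φ t n‖ ≤ C * ε^3 := by
  -- constants
  set P : ℝ := max (Cμ₀ / Real.sqrt μ) Cγ₀ with hP
  have hPpos : 0 < P := lt_max_of_lt_right hCγ₀
  set A : ℝ := 1 + μ * P^2 with hA
  set B : ℝ := 2 + 4 * μ * P^2 with hB
  set K : ℝ := 2*A + B with hK
  have hKpos : 0 < K := by
    have h1 : 0 < μ * P^2 := mul_pos hμ (pow_pos hPpos 2)
    simp only [hK, hA, hB]; linarith
  set D : ℝ := μ * P^2 with hD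
  set Ec : ℝ := γ * P ^ (2*σ) with hEc
  have hDpos : 0 < D := mul_pos hμ (pow_pos hPpos 2)
  have hEcpos : 0 < Ec := mul_pos hγ (Real.rpow_pos_of_pos hPpos _)
  set dc : ℝ := (2*D + Ec) * P with hdc
  have hdcpos : 0 < dc := mul_pos (by linarith) hPpos
  refine ⟨dc * Real.exp (K * Tf) / K + 1, by positivity, ?_⟩
  intro ε hε hε1 ψ φ hAL hDNLS hinit hφ0 hψ0sum
  obtain ⟨ψdot, hψdotcont, hψprop⟩ := hAL
  obtain ⟨φdot, hφdotcont, hφprop⟩ := hDNLS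
  have hεle : ε ≤ 1 := le_of_lt hε1
  have hcontψ : ContinuousOn ψ (Icc 0 Tf) := fun s hs => (hψprop s hs).1.continuousWithinAt
  have hcontφ : ContinuousOn φ (Icc 0 Tf) := fun s hs => (hφprop s hs).1.continuousWithinAt
  have h0mem : (0:ℝ) ∈ Icc (0:ℝ) Tf := ⟨le_refl _, hTf.le⟩
  -- AL conserved quantity
  set gA : ℝ → ℤ → ℝ := fun s n => Real.log (1 + μ * ‖ψ s n‖^2) with hgA
  have hsumA : ∀ t ∈ Icc (0:ℝ) Tf, Summable (gA t) := by
    intro t ht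
    apply Summable.of_nonneg_of_le _ _ ((sq_summable (ψ t)).mul_left μ)
    · intro n
      apply Real.log_nonneg
      nlinarith [sq_nonneg ‖ψ t n‖, norm_nonneg (ψ t n)]
    · intro n
      have h1 : (0:ℝ) < 1 + μ * ‖ψ t n‖^2 := by nlinarith [sq_nonneg ‖ψ t n‖]
      have := Real.log_le_sub_one_of_pos h1
      simpa [hgA] using this
  have hgAderiv : ∀ n : ℤ, ∀ t ∈ Icc (0:ℝ) Tf,
      HasDerivWithinAt (fun s => gA s n)
        ((2*μ) * ((starRingEnd ℂ) (ψ t n) * (ψ t (n+1) + ψ t (n-1))).im) (Icc 0 Tf) t := by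
    intro n t ht
    have hz : HasDerivWithinAt (fun s => ψ s n) (ψdot t n) (Icc 0 Tf) t :=
      (ev n).hasFDerivAt.comp_hasDerivWithinAt t (hψprop t ht).1
    have hsq := hasDeriv_normSq hz
    have hpos : (0:ℝ) < 1 + μ * ‖ψ t n‖^2 := by nlinarith [sq_nonneg ‖ψ t n‖]
    have hinner : HasDerivWithinAt (fun s => 1 + μ * ‖ψ s n‖^2)
        (μ * (2 * ((starRingEnd ℂ) (ψ t n) * (ψdot t n)).re)) (Icc 0 Tf) t :=
      (hsq.const_mul μ).const_add 1
    have hlog := (Real.hasDerivAt_log hpos.ne').comp_hasDerivWithinAt t hinner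
    -- identify derivative value
    have heq := (hψprop t ht).2 n
    have hzeq := solve_I _ _ heq
    have hre : ((starRingEnd ℂ) (ψ t n) * (ψdot t n)).re
        = (1 + μ * ‖ψ t n‖^2) * ((starRingEnd ℂ) (ψ t n) * (ψ t (n+1) + ψ t (n-1))).im := by
      rw [hzeq, re_conj_neg_I]
      have hcast : (μ:ℂ) * ((‖ψ t n‖)^2 : ℝ) = (((μ * ‖ψ t n‖^2 : ℝ)):ℂ) := by
        push_cast; ring
      rw [hcast]
      exact alg_AL _ _ _ _
    refine HasDerivWithinAt.congr_deriv hlog ?_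
    rw [hre]
    field_simp
  have hconsA := conserve Tf (2*μ) ψ hcontψ gA hgAderiv hsumA
  -- DNLS conserved quantity
  set gB : ℝ → ℤ → ℝ := fun s n => ‖φ s n‖^2 with hgB
  have hsumB : ∀ t ∈ Icc (0:ℝ) Tf, Summable (gB t) := fun t _ => sq_summable (φ t)
  have hgBderiv : ∀ n : ℤ, ∀ t ∈ Icc (0:ℝ) Tf,
      HasDerivWithinAt (fun s => gB s n)
        ((2:ℝ) * ((starRingEnd ℂ) (φ t n) * (φ t (n+1) + φ t (n-1))).im) (Icc 0 Tf) t := by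
    intro n t ht
    have hz : HasDerivWithinAt (fun s => φ s n) (φdot t n) (Icc 0 Tf) t :=
      (ev n).hasFDerivAt.comp_hasDerivWithinAt t (hφprop t ht).1
    have hsq := hasDeriv_normSq hz
    have heq := (hφprop t ht).2 n
    have hzeq := solve_I _ _ heq
    convert hsq using 1
    rw [hzeq, re_conj_neg_I]
    have hcast : (γ:ℂ) * ((‖φ t n‖) ^ (2*σ) : ℝ) * (φ t n)
        = (((γ * (‖φ t n‖) ^ (2*σ) : ℝ)):ℂ) * (φ t n) := by
      push_cast; ring
    rw [hcast, alg_DNLS]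
  have hconsB := conserve Tf 2 φ hcontφ gB hgBderiv hsumB
  -- DNLS norm bound
  have hφbound : ∀ t ∈ Icc (0:ℝ) Tf, ‖φ t‖ ≤ P * ε := by
    intro t ht
    have h1 : ‖φ t‖^2 = ‖φ 0‖^2 := by
      rw [norm_sq_eq, norm_sq_eq]
      exact hconsB t ht
    have h2 : ‖φ t‖ = ‖φ 0‖ :=
      (pow_left_inj₀ (norm_nonneg _) (norm_nonneg _) two_ne_zero).1 h1
    rw [h2]
    calc ‖φ 0‖ ≤ Cγ₀ * ε := hφ0
      _ ≤ P * ε := mul_le_mul_of_nonneg_right (le_max_right _ _) hε.le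
  -- AL norm bound
  set Bε : ℝ := (Cμ₀ * ε)^2 with hBε
  have hBεpos : 0 < Bε := pow_pos (mul_pos hCμ₀ hε) 2
  have hψ0sum' : ∑' n, gA 0 n ≤ Real.log (1 + Bε) := by
    have : (fun n : ℤ => gA 0 n) = fun n : ℤ => Real.log (1 + μ * (‖ψ 0 n‖)^2) := by
      funext n; simp only [hgA]
    rw [this]
    exact hψ0sum
  have hψbound : ∀ t ∈ Icc (0:ℝ) Tf, ‖ψ t‖ ≤ P * ε := by
    intro t ht
    have hsumt := hsumA t ht
    have hAll : ∑' n, gA t n ≤ Real.log (1 + Bε) := by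
      rw [hconsA t ht]; exact hψ0sum'
    have hnonneg : ∀ n : ℤ, 0 ≤ gA t n := by
      intro n
      apply Real.log_nonneg
      nlinarith [sq_nonneg ‖ψ t n‖]
    -- each component bounded
    have hcomp : ∀ n : ℤ, μ * ‖ψ t n‖^2 ≤ Bε := by
      intro n
      have h1 : gA t n ≤ Real.log (1 + Bε) :=
        le_trans (Summable.le_tsum hsumt n (fun m _ => hnonneg m)) hAll
      have h2 : (0:ℝ) < 1 + μ * ‖ψ t n‖^2 := by nlinarith [sq_nonneg ‖ψ t n‖]
      have h3 := (Real.log_le_log_iff h2 (by linarith)).1 h1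
      linarith
    -- ℓ²-bound via concavity
    have hsum2 : Summable (fun n : ℤ => μ * ‖ψ t n‖^2) := (sq_summable (ψ t)).mul_left μ
    have hconc : ∀ n : ℤ, (μ * ‖ψ t n‖^2) * Real.log (1 + Bε) ≤ Bε * gA t n := by
      intro n
      exact log_concave_bound (by positivity) (hcomp n) hBεpos
    have hts : (∑' n, (μ * ‖ψ t n‖^2)) * Real.log (1 + Bε) ≤ Bε * Real.log (1 + Bε) := by
      have h4 : ∑' n, ((μ * ‖ψ t n‖^2) * Real.log (1 + Bε)) ≤ ∑' n, Bε * gA t n :=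
        Summable.tsum_le_tsum hconc (hsum2.mul_right _) (hsumt.mul_left _)
      have h4l : ∑' n, ((μ * ‖ψ t n‖^2) * Real.log (1 + Bε))
          = (∑' n, (μ * ‖ψ t n‖^2)) * Real.log (1 + Bε) := tsum_mul_right
      have h4r : ∑' n, Bε * gA t n = Bε * ∑' n, gA t n := tsum_mul_left
      calc (∑' n, (μ * ‖ψ t n‖^2)) * Real.log (1 + Bε)
          = ∑' n, ((μ * ‖ψ t n‖^2) * Real.log (1 + Bε)) := h4l.symm
        _ ≤ ∑' n, Bε * gA t n := h4
        _ = Bε * ∑' n, gA t n := h4r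
        _ ≤ Bε * Real.log (1 + Bε) := mul_le_mul_of_nonneg_left hAll hBεpos.le
    have hlogpos : 0 < Real.log (1 + Bε) := Real.log_pos (by linarith)
    have h5 : ∑' n, (μ * ‖ψ t n‖^2) ≤ Bε :=
      le_of_mul_le_mul_right (by linarith [hts]) hlogpos
    have h6 : μ * ‖ψ t‖^2 ≤ Bε := by
      rw [norm_sq_eq, ← tsum_mul_left]
      exact h5
    have h7 : ‖ψ t‖^2 ≤ (Cμ₀ / Real.sqrt μ * ε)^2 := by
      have hsq : Real.sqrt μ ^ 2 = μ := Real.sq_sqrt hμ.le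
      have hsqpos : 0 < Real.sqrt μ := Real.sqrt_pos.2 hμ
      have hrhs : (Cμ₀ / Real.sqrt μ * ε)^2 = Bε / μ := by
        rw [hBε, mul_pow, div_pow, hsq, mul_pow]
        ring
      rw [hrhs, le_div_iff₀ hμ]
      calc ‖ψ t‖^2 * μ = μ * ‖ψ t‖^2 := by ring
        _ ≤ Bε := h6
    have h8 : ‖ψ t‖ ≤ Cμ₀ / Real.sqrt μ * ε := by
      have := (pow_le_pow_iff_left₀ (norm_nonneg _) (by positivity) two_ne_zero).1 h7
      exact this
    calc ‖ψ t‖ ≤ Cμ₀ / Real.sqrt μ * ε := h8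
      _ ≤ P * ε := mul_le_mul_of_nonneg_right (le_max_left _ _) hε.le
  -- key differential inequality
  set dl : ℝ := dc * ε^3 with hdl
  have hkey : ∀ t ∈ Icc (0:ℝ) Tf, ‖ψdot t - φdot t‖ ≤ K * ‖ψ t - φ t‖ + dl := by
    intro t ht
    set w : Seq2 := ψ t - φ t with hw
    set v : Seq2 := ψdot t - φdot t with hv
    have hψn : ∀ m : ℤ, ‖ψ t m‖ ≤ P * ε := fun m => (apply_le_norm _ m).trans (hψbound t ht)
    have hφn : ∀ m : ℤ, ‖φ t m‖ ≤ P * ε := fun m => (apply_le_norm _ m).trans (hφbound t ht)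
    have hwc : ∀ m : ℤ, (w : ∀ _ : ℤ, ℂ) m = ψ t m - φ t m := fun m => by
      rw [hw]; exact congrFun (lp.coeFn_sub (ψ t) (φ t)) m
    have hε2 : ε^2 ≤ 1 := pow_le_one₀ hε.le hεle
    -- pointwise bound on the derivative components
    have hpoint : ∀ n : ℤ, ‖(v : ∀ _ : ℤ, ℂ) n‖ ≤
        A * ‖(w : ∀ _ : ℤ, ℂ) (n+1)‖ + A * ‖(w : ∀ _ : ℤ, ℂ) (n+(-1))‖
          + B * ‖(w : ∀ _ : ℤ, ℂ) (n+0)‖ + (D*ε^2) * ‖φ t (n+1)‖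
          + (D*ε^2) * ‖φ t (n+(-1))‖ + (Ec*ε^2) * ‖φ t (n+0)‖ := by
      intro n
      have hneg : n + (-1 : ℤ) = n - 1 := by ring
      have hzer : n + (0:ℤ) = n := by ring
      rw [hneg, hzer]
      have hvc : (v : ∀ _ : ℤ, ℂ) n = ψdot t n - φdot t n := by
        rw [hv]; exact congrFun (lp.coeFn_sub (ψdot t) (φdot t)) n
      have hXn := (hψprop t ht).2 n
      have hYn := (hφprop t ht).2 n
      set rψ : ℝ := (‖ψ t n‖)^2 with hrψdef
      set rφ : ℝ := (‖φ t n‖)^2 with hrφdef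
      set sφ : ℝ := (‖φ t n‖)^(2*σ) with hsφdef
      set a0 : ℂ := ψ t n with ha0
      set a1 : ℂ := ψ t (n+1) with ha1
      set am : ℂ := ψ t (n-1) with ham
      set b0 : ℂ := φ t n with hb0
      set b1 : ℂ := φ t (n+1) with hb1
      set bm : ℂ := φ t (n-1) with hbm
      have hrψ0 : 0 ≤ rψ := by rw [hrψdef]; positivity
      have hrφ0 : 0 ≤ rφ := by rw [hrφdef]; positivity
      have hsφ0 : 0 ≤ sφ := by rw [hsφdef]; positivity
      have hIv : Complex.I * ((v : ∀ _ : ℤ, ℂ) n) =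
          (((a1-b1) - 2*(a0-b0) + (am-bm)) + ((μ*rψ : ℝ):ℂ)*((a1-b1)+(am-bm)))
          + ((μ*(rψ-rφ) : ℝ):ℂ)*(b1+bm)
          + ((μ*rφ : ℝ):ℂ)*(b1+bm)
          - ((γ*sφ : ℝ):ℂ)*b0 := by
        rw [hvc, mul_sub, hXn, hYn]
        push_cast
        ring
      have hnv : ‖(v : ∀ _ : ℤ, ℂ) n‖ = ‖Complex.I * ((v : ∀ _ : ℤ, ℂ) n)‖ := by
        rw [norm_mul, Complex.norm_I, one_mul]
      -- a priori component bounds (folded to the local names)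
      have hpa0 : ‖a0‖ ≤ P * ε := by rw [ha0]; exact hψn n
      have hpb0 : ‖b0‖ ≤ P * ε := by rw [hb0]; exact hφn n
      have hpb1 : ‖b1‖ ≤ P * ε := by rw [hb1]; exact hφn (n+1)
      have hpbm : ‖bm‖ ≤ P * ε := by rw [hbm]; exact hφn (n-1)
      have habs_a : rψ = ‖a0‖^2 := by rw [hrψdef, ha0]
      have habs_b : rφ = ‖b0‖^2 := by rw [hrφdef, hb0]
      have hra : rψ ≤ P^2 := by
        rw [habs_a]
        calc ‖a0‖^2 ≤ (P*ε)^2 := pow_le_pow_left₀ (norm_nonneg _) hpa0 2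
          _ = P^2 * ε^2 := by ring
          _ ≤ P^2 := mul_le_of_le_one_right (by positivity) hε2
      have hrb : rφ ≤ P^2 * ε^2 := by
        rw [habs_b]
        calc ‖b0‖^2 ≤ (P*ε)^2 := pow_le_pow_left₀ (norm_nonneg _) hpb0 2
          _ = P^2 * ε^2 := by ring
      have hsb : sφ ≤ P^(2*σ) * ε^2 := by
        have h2' : sφ ≤ (P*ε)^(2*σ) := by
          rw [hsφdef]
          apply Real.rpow_le_rpow (norm_nonneg _) _ (by linarith)
          exact hφn n
        have h3' : (P*ε)^(2*σ) = P^(2*σ) * ε^(2*σ) := Real.mul_rpow hPpos.le hε.le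
        have h4' : ε^(2*σ) ≤ ε^(2:ℝ) :=
          Real.rpow_le_rpow_of_exponent_ge hε hεle (by linarith)
        have h5' : ε^(2:ℝ) = ε^2 := by
          rw [show (2:ℝ) = ((2:ℕ):ℝ) by norm_num, Real.rpow_natCast]
        calc sφ ≤ P^(2*σ) * ε^(2*σ) := by rw [← h3']; exact h2'
          _ ≤ P^(2*σ) * ε^2 := by
              rw [← h5']
              exact mul_le_mul_of_nonneg_left h4' (Real.rpow_nonneg hPpos.le _)
      -- difference of squares bound
      have hdiff : |rψ - rφ| ≤ (2*(P*ε)) * ‖a0 - b0‖ := by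
        have he : rψ - rφ = (‖a0‖ + ‖b0‖) * (‖a0‖ - ‖b0‖) := by
          rw [habs_a, habs_b]; ring
        rw [he, abs_mul, abs_of_nonneg (by positivity)]
        have h1' : |‖a0‖ - ‖b0‖| ≤ ‖a0 - b0‖ := abs_norm_sub_norm_le a0 b0
        have h2' : ‖a0‖ + ‖b0‖ ≤ 2*(P*ε) := by linarith
        exact mul_le_mul h2' h1' (abs_nonneg _) (by positivity)
      -- bound each group
      have hT1 : ‖((a1-b1) - 2*(a0-b0) + (am-bm)) + ((μ*rψ : ℝ):ℂ)*((a1-b1)+(am-bm))‖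
          ≤ (1 + μ*rψ)*(‖a1 - b1‖+‖am - bm‖) + 2*‖a0 - b0‖ := by
        have e2 : ‖(a1-b1) - 2*(a0-b0) + (am-bm)‖ ≤ ‖a1 - b1‖ + 2*‖a0 - b0‖ + ‖am - bm‖ := by
          have t5 : ‖(2:ℂ)*(a0-b0)‖ = 2*‖a0 - b0‖ := by rw [norm_mul]; norm_num
          calc ‖(a1-b1) - 2*(a0-b0) + (am-bm)‖
              ≤ ‖(a1-b1) - 2*(a0-b0)‖ + ‖am - bm‖ := norm_add_le _ _
            _ ≤ ‖a1 - b1‖ + 2*‖a0 - b0‖ + ‖am - bm‖ := by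
                have := norm_sub_le (a1-b1) ((2:ℂ)*(a0-b0))
                rw [t5] at this
                linarith
        have e3 : ‖((μ*rψ : ℝ):ℂ)‖ = μ*rψ := by
          rw [Complex.norm_real, Real.norm_eq_abs, abs_of_nonneg (by positivity)]
        have e4 : ‖(a1-b1)+(am-bm)‖ ≤ ‖a1 - b1‖ + ‖am - bm‖ := norm_add_le _ _
        calc ‖((a1-b1) - 2*(a0-b0) + (am-bm)) + ((μ*rψ : ℝ):ℂ)*((a1-b1)+(am-bm))‖
            ≤ ‖(a1-b1) - 2*(a0-b0) + (am-bm)‖ + ‖((μ*rψ : ℝ):ℂ)*((a1-b1)+(am-bm))‖ :=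
              norm_add_le _ _
          _ ≤ (‖a1 - b1‖ + 2*‖a0 - b0‖ + ‖am - bm‖)
                + (μ*rψ)*(‖a1 - b1‖ + ‖am - bm‖) := by
              rw [norm_mul, e3]
              have := mul_le_mul_of_nonneg_left e4 (by positivity : (0:ℝ) ≤ μ*rψ)
              linarith
          _ = (1 + μ*rψ)*(‖a1 - b1‖+‖am - bm‖) + 2*‖a0 - b0‖ := by ring
      have hT2 : ‖((μ*(rψ-rφ) : ℝ):ℂ)*(b1+bm)‖ ≤ (4*μ*P^2) * ‖a0 - b0‖ := by
        have e1 : ‖((μ*(rψ-rφ) : ℝ):ℂ)‖ = μ * |rψ-rφ| := by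
          rw [Complex.norm_real, Real.norm_eq_abs, abs_mul, abs_of_nonneg hμ.le]
        have e2 : ‖b1+bm‖ ≤ 2*(P*ε) := le_trans (norm_add_le _ _) (by linarith)
        rw [norm_mul, e1]
        calc μ * |rψ-rφ| * ‖b1+bm‖ ≤ μ * ((2*(P*ε))*‖a0 - b0‖) * (2*(P*ε)) := by
              apply mul_le_mul
              · exact mul_le_mul_of_nonneg_left hdiff hμ.le
              · exact e2
              · exact norm_nonneg _
              · positivity
          _ = (4*μ*P^2) * ‖a0 - b0‖ * ε^2 := by ring
          _ ≤ (4*μ*P^2) * ‖a0 - b0‖ :=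
              mul_le_of_le_one_right (by positivity) hε2
      have hT3 : ‖((μ*rφ : ℝ):ℂ)*(b1+bm)‖ ≤ (D*ε^2)*(‖b1‖+‖bm‖) := by
        have e1 : ‖((μ*rφ : ℝ):ℂ)‖ = μ * rφ := by
          rw [Complex.norm_real, Real.norm_eq_abs, abs_of_nonneg (by positivity)]
        rw [norm_mul, e1]
        calc μ * rφ * ‖b1+bm‖ ≤ (μ * (P^2*ε^2)) * (‖b1‖+‖bm‖) := by
              apply mul_le_mul
              · exact mul_le_mul_of_nonneg_left hrb hμ.le
              · exact norm_add_le _ _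
              · exact norm_nonneg _
              · positivity
          _ = (D*ε^2)*(‖b1‖+‖bm‖) := by rw [hD]; ring
      have hT4 : ‖((γ*sφ : ℝ):ℂ)*b0‖ ≤ (Ec*ε^2)*‖b0‖ := by
        have e1 : ‖((γ*sφ : ℝ):ℂ)‖ = γ * sφ := by
          rw [Complex.norm_real, Real.norm_eq_abs, abs_of_nonneg (by positivity)]
        rw [norm_mul, e1]
        calc γ * sφ * ‖b0‖ ≤ (γ * (P^(2*σ)*ε^2)) * ‖b0‖ :=
              mul_le_mul_of_nonneg_right
                (mul_le_mul_of_nonneg_left hsb hγ.le) (norm_nonneg _)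
          _ = (Ec*ε^2)*‖b0‖ := by rw [hEc]; ring
      -- combine
      have htotal : ‖(v : ∀ _ : ℤ, ℂ) n‖ ≤
          ((1 + μ*rψ)*(‖a1 - b1‖+‖am - bm‖) + 2*‖a0 - b0‖) + (4*μ*P^2)*‖a0 - b0‖
            + (D*ε^2)*(‖b1‖+‖bm‖) + (Ec*ε^2)*‖b0‖ := by
        rw [hnv, hIv]
        have t1 := norm_add_le ((((a1-b1) - 2*(a0-b0) + (am-bm))
          + ((μ*rψ : ℝ):ℂ)*((a1-b1)+(am-bm))) + ((μ*(rψ-rφ) : ℝ):ℂ)*(b1+bm))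
          (((μ*rφ : ℝ):ℂ)*(b1+bm))
        have t2 := norm_add_le (((a1-b1) - 2*(a0-b0) + (am-bm))
          + ((μ*rψ : ℝ):ℂ)*((a1-b1)+(am-bm))) (((μ*(rψ-rφ) : ℝ):ℂ)*(b1+bm))
        have t0 := norm_sub_le ((((a1-b1) - 2*(a0-b0) + (am-bm))
          + ((μ*rψ : ℝ):ℂ)*((a1-b1)+(am-bm))) + ((μ*(rψ-rφ) : ℝ):ℂ)*(b1+bm)
          + ((μ*rφ : ℝ):ℂ)*(b1+bm)) (((γ*sφ : ℝ):ℂ)*b0)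
        linarith
      -- identify with the target expression
      have hwn1 : ‖(w : ∀ _ : ℤ, ℂ) (n+1)‖ = ‖a1 - b1‖ := by
        rw [hwc (n+1), ha1, hb1]
      have hwn0 : ‖(w : ∀ _ : ℤ, ℂ) n‖ = ‖a0 - b0‖ := by rw [hwc n, ha0, hb0]
      have hwnm : ‖(w : ∀ _ : ℤ, ℂ) (n-1)‖ = ‖am - bm‖ := by rw [hwc (n-1), ham, hbm]
      rw [hwn1, hwn0, hwnm]
      have hc1 : (1 + μ*rψ)*(‖a1 - b1‖+‖am - bm‖) ≤ A*(‖a1 - b1‖+‖am - bm‖) := by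
        apply mul_le_mul_of_nonneg_right _ (by positivity)
        rw [hA, hD]
        have := mul_le_mul_of_nonneg_left hra hμ.le
        linarith
      have hdist : A*(‖a1 - b1‖+‖am - bm‖) = A*‖a1 - b1‖ + A*‖am - bm‖ := by ring
      have hdist2 : (D*ε^2)*(‖b1‖+‖bm‖) = (D*ε^2)*‖b1‖ + (D*ε^2)*‖bm‖ := by ring
      have hBn0 : B*‖a0 - b0‖ = 2*‖a0 - b0‖ + (4*μ*P^2)*‖a0 - b0‖ := by rw [hB]; ring
      linarith [hc1, htotal, hdist, hdist2, hBn0]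
    -- assemble in ℓ²
    set Z : RSeq2 := A • aS w 1 + A • aS w (-1) + B • aS w 0
      + (D*ε^2) • aS (φ t) 1 + (D*ε^2) • aS (φ t) (-1) + (Ec*ε^2) • aS (φ t) 0 with hZ
    have hZn : ∀ n : ℤ, (Z : ∀ _ : ℤ, ℝ) n
        = A * ‖(w : ∀ _ : ℤ, ℂ) (n+1)‖ + A * ‖(w : ∀ _ : ℤ, ℂ) (n+(-1))‖
          + B * ‖(w : ∀ _ : ℤ, ℂ) (n+0)‖ + (D*ε^2) * ‖φ t (n+1)‖
          + (D*ε^2) * ‖φ t (n+(-1))‖ + (Ec*ε^2) * ‖φ t (n+0)‖ := by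
      intro n
      rw [hZ]
      simp only [lp.coeFn_add, Pi.add_apply, lp.coeFn_smul, Pi.smul_apply, aS_apply,
        smul_eq_mul]
    have hvZ : ‖v‖ ≤ ‖Z‖ :=
      norm_le_of_pointwise v Z (fun n => by rw [hZn n]; exact hpoint n)
    have hcoef1 : 0 ≤ A := by positivity
    have hcoef2 : 0 ≤ B := by rw [hB]; positivity
    have hZnorm : ‖Z‖ ≤ (2*A + B) * ‖w‖ + (2*D + Ec) * ε^2 * ‖φ t‖ := by
      have tri : ‖Z‖ ≤ ‖A • aS w 1‖ + ‖A • aS w (-1)‖ + ‖B • aS w 0‖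
          + ‖(D*ε^2) • aS (φ t) 1‖ + ‖(D*ε^2) • aS (φ t) (-1)‖
          + ‖(Ec*ε^2) • aS (φ t) 0‖ := by
        rw [hZ]
        refine le_trans (norm_add_le _ _) ?_
        have t1 := norm_add_le (A • aS w 1 + A • aS w (-1) + B • aS w 0
          + (D*ε^2) • aS (φ t) 1) ((D*ε^2) • aS (φ t) (-1))
        have t2 := norm_add_le (A • aS w 1 + A • aS w (-1) + B • aS w 0)
          ((D*ε^2) • aS (φ t) 1)
        have t3 := norm_add_le (A • aS w 1 + A • aS w (-1)) (B • aS w 0)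
        have t4 := norm_add_le (A • aS w 1) (A • aS w (-1))
        linarith
      have hsm : ∀ (c : ℝ) (x : Seq2) (k : ℤ), 0 ≤ c → ‖c • aS x k‖ = c * ‖x‖ := by
        intro c x k hc
        rw [norm_smul, aS_norm, Real.norm_eq_abs, abs_of_nonneg hc]
      rw [hsm A w 1 hcoef1, hsm A w (-1) hcoef1, hsm B w 0 hcoef2,
        hsm _ _ 1 (by positivity), hsm _ _ (-1) (by positivity),
        hsm _ _ 0 (by positivity)] at tri
      linarith [tri]
    have hφt : ‖φ t‖ ≤ P * ε := hφbound t ht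
    calc ‖v‖ ≤ ‖Z‖ := hvZ
      _ ≤ (2*A + B) * ‖w‖ + (2*D + Ec) * ε^2 * ‖φ t‖ := hZnorm
      _ ≤ K * ‖w‖ + dl := by
          rw [hK, hdl, hdc]
          have h1 : (2*D + Ec) * ε^2 * ‖φ t‖ ≤ (2*D + Ec) * ε^2 * (P*ε) :=
            mul_le_mul_of_nonneg_left hφt (by positivity)
          have h2 : (2*D + Ec) * ε^2 * (P*ε) = (2*D + Ec) * P * ε^3 := by ring
          linarith
  -- Gronwall
  have hfcont : ContinuousOn (fun s => ψ s - φ s) (Icc 0 Tf) :=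
    fun s hs => ((hψprop s hs).1.sub (hφprop s hs).1).continuousWithinAt
  have hfderiv : ∀ x ∈ Ico (0:ℝ) Tf,
      HasDerivWithinAt (fun s => ψ s - φ s) (ψdot x - φdot x) (Ici x) x := by
    intro x hx
    have h := (hψprop x ⟨hx.1, hx.2.le⟩).1.sub (hφprop x ⟨hx.1, hx.2.le⟩).1
    apply h.mono_of_mem_nhdsWithin
    exact mem_nhdsWithin.2 ⟨Iio Tf, isOpen_Iio, hx.2,
      fun y hy => ⟨le_trans hx.1 hy.2, hy.1.le⟩⟩
  have hzero : ‖ψ 0 - φ 0‖ ≤ (0:ℝ) := by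
    rw [hinit, sub_self, norm_zero]
  have hgron := norm_le_gronwallBound_of_norm_deriv_right_le hfcont hfderiv hzero
    (fun x hx => hkey x ⟨hx.1, hx.2.le⟩)
  intro t ht n
  have h1 : ‖ψ t - φ t‖ ≤ gronwallBound 0 K dl (t - 0) := hgron t ht
  have h2 : gronwallBound 0 K dl (t - 0) ≤ dc * Real.exp (K * Tf) / K * ε^3 := by
    rw [gronwallBound_of_K_ne_0 hKpos.ne']
    have hexp : Real.exp (K * (t - 0)) - 1 ≤ Real.exp (K * Tf) := by
      have : Real.exp (K * (t - 0)) ≤ Real.exp (K * Tf) :=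
        Real.exp_le_exp.2 (mul_le_mul_of_nonneg_left (by linarith [ht.2]) hKpos.le)
      linarith
    have hd : 0 ≤ dl / K := by positivity
    calc (0:ℝ) * Real.exp (K * (t-0)) + dl / K * (Real.exp (K * (t-0)) - 1)
        = dl / K * (Real.exp (K * (t-0)) - 1) := by ring
      _ ≤ dl / K * Real.exp (K * Tf) := mul_le_mul_of_nonneg_left hexp hd
      _ = dc * Real.exp (K * Tf) / K * ε^3 := by rw [hdl]; ring
  have h3 : ‖ψ t n - φ t n‖ ≤ ‖ψ t - φ t‖ := by
    have : ψ t n - φ t n = (ψ t - φ t : Seq2) n :=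
      (congrFun (lp.coeFn_sub (ψ t) (φ t)) n).symm
    rw [this]
    exact apply_le_norm _ n
  have hε3 : 0 < ε^3 := by positivity
  calc ‖ψ t n - φ t n‖ ≤ ‖ψ t - φ t‖ := h3
    _ ≤ dc * Real.exp (K * Tf) / K * ε^3 := le_trans h1 h2
    _ ≤ (dc * Real.exp (K * Tf) / K + 1) * ε^3 :=
        mul_le_mul_of_nonneg_right (by linarith) hε3.le
end
end

section
/- Let μ > 0 and let ψ be a solution of the AL lattice on [0,T_f]. Then the deformed norm P_μ(ψ(t)) = ∑_{n∈ℤ} ln(1 + μ|ψ_n(t)|²) is conserved: P_μ(ψ(t)) = P_μ(ψ(0)) for all t ∈ [0,T_f]. -/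
noncomputable section

open Set

/-! ### Auxiliary material for the conservation proof -/

namespace ALConserved

lemma sq_summable (u : Seq2) : Summable (fun n : ℤ => ‖u n‖^2) := by
  have h := (lp.memℓp u).summable (p := 2) (by norm_num)
  convert h using 2 with n
  rw [ENNReal.toReal_ofNat, ← Real.rpow_natCast]
  norm_num

lemma norm_sq_eq (u : Seq2) : ‖u‖^2 = ∑' n : ℤ, ‖u n‖^2 := by
  have h := lp.norm_rpow_eq_tsum (p := 2) (by norm_num) u
  rw [ENNReal.toReal_ofNat] at h
  calc ‖u‖^2 = ‖u‖ ^ (2:ℝ) := by rw [← Real.rpow_natCast]; norm_num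
  _ = ∑' n : ℤ, ‖u n‖ ^ (2:ℝ) := h
  _ = _ := by congr 1; funext n; rw [← Real.rpow_natCast]; norm_num

lemma log_est0 {x : ℝ} (hx : 0 < x) : |Real.log x - (x-1)| ≤ (x-1)^2 / x := by
  have hup : Real.log x ≤ x - 1 := Real.log_le_sub_one_of_pos hx
  have hlo : 1 - x⁻¹ ≤ Real.log x := Real.one_sub_inv_le_log_of_pos hx
  have h2 : (x-1) - (x-1)^2/x = 1 - x⁻¹ := by field_simp; ring
  rw [abs_le]
  constructor
  · linarith
  · linarith [div_nonneg (sq_nonneg (x-1)) hx.le]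

lemma log_est {a b : ℝ} (ha : 0 ≤ a) (hb : 0 ≤ b) :
    |Real.log (1+a) - Real.log (1+b) - (a-b)/(1+b)| ≤ (a-b)^2 := by
  have h1a : (0:ℝ) < 1 + a := by linarith
  have h1b : (0:ℝ) < 1 + b := by linarith
  have hxpos : 0 < (1+a)/(1+b) := div_pos h1a h1b
  have key := log_est0 hxpos
  have hlog : Real.log ((1+a)/(1+b)) = Real.log (1+a) - Real.log (1+b) :=
    Real.log_div h1a.ne' h1b.ne'
  have hx1 : (1+a)/(1+b) - 1 = (a-b)/(1+b) := by field_simp; ring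
  rw [hlog, hx1] at key
  refine key.trans ?_
  have heq : ((a-b)/(1+b))^2/((1+a)/(1+b)) = (a-b)^2/((1+b)*(1+a)) := by
    field_simp
  rw [heq]
  apply div_le_self (sq_nonneg _)
  nlinarith

lemma W_norm_le {μ : ℝ} (hμ : 0 < μ) (u : Seq2) (n : ℤ) :
    ‖((2*μ / (1+μ*‖u n‖^2) : ℝ) : ℂ) * u n‖ ≤ 2*μ*‖u n‖ := by
  have hd : (1:ℝ) ≤ 1 + μ*‖u n‖^2 := by nlinarith [sq_nonneg ‖u n‖]
  rw [norm_mul, Complex.norm_real, Real.norm_eq_abs,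
    _root_.abs_of_nonneg (by positivity : (0:ℝ) ≤ 2*μ / (1+μ*‖u n‖^2))]
  have : 2*μ / (1+μ*‖u n‖^2) ≤ 2*μ := div_le_self (by positivity) hd
  exact mul_le_mul_of_nonneg_right this (norm_nonneg _)

lemma W_mem {μ : ℝ} (hμ : 0 < μ) (u : Seq2) :
    Memℓp (fun n : ℤ => ((2*μ / (1+μ*‖u n‖^2) : ℝ) : ℂ) * u n) 2 := by
  apply memℓp_gen
  have hs : Summable (fun n : ℤ => (2*μ)^2 * ‖u n‖^2) := (sq_summable u).mul_left _
  have : Summable (fun n : ℤ => ‖((2*μ / (1+μ*‖u n‖^2) : ℝ) : ℂ) * u n‖^2) := by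
    refine hs.of_nonneg_of_le (fun n => by positivity) (fun n => ?_)
    calc ‖((2*μ / (1+μ*‖u n‖^2) : ℝ) : ℂ) * u n‖^2 ≤ (2*μ*‖u n‖)^2 :=
          pow_le_pow_left₀ (norm_nonneg _) (W_norm_le hμ u n) 2
    _ = (2*μ)^2 * ‖u n‖^2 := by ring
  convert this using 2 with n
  rw [ENNReal.toReal_ofNat, ← Real.rpow_natCast]
  norm_num

/-- The gradient-like element of ℓ². -/
def W {μ : ℝ} (hμ : 0 < μ) (u : Seq2) : Seq2 := ⟨_, W_mem hμ u⟩

lemma W_apply {μ : ℝ} (hμ : 0 < μ) (u : Seq2) (n : ℤ) :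
    (W hμ u) n = ((2*μ / (1+μ*‖u n‖^2) : ℝ) : ℂ) * u n := rfl

/-- The derivative of the deformed norm, as a continuous linear functional. -/
def Lmap {μ : ℝ} (hμ : 0 < μ) (u : Seq2) : Seq2 →L[ℝ] ℝ :=
  Complex.reCLM.comp ((innerSL ℂ (W hμ u)).restrictScalars ℝ)

lemma Wterm {μ : ℝ} (hμ : 0 < μ) (u v : Seq2) (n : ℤ) :
    (inner (𝕜 := ℂ) (W hμ u n) (v n)).re
      = (2*μ / (1+μ*‖u n‖^2)) * ((starRingEnd ℂ) (u n) * v n).re := by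
  rw [RCLike.inner_apply, W_apply, map_mul, Complex.conj_ofReal, mul_comm (v n : ℂ), mul_assoc,
    Complex.re_ofReal_mul]

lemma summable_Lterm {μ : ℝ} (hμ : 0 < μ) (u v : Seq2) :
    Summable (fun n : ℤ => (2*μ / (1+μ*‖u n‖^2)) * ((starRingEnd ℂ) (u n) * v n).re) := by
  have h := lp.summable_inner (𝕜 := ℂ) (W hμ u) v
  exact ((h.hasSum.mapL Complex.reCLM).summable).congr (fun n => Wterm hμ u v n)

lemma Lmap_apply {μ : ℝ} (hμ : 0 < μ) (u v : Seq2) :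
    Lmap hμ u v = ∑' n : ℤ, (2*μ / (1+μ*‖u n‖^2)) * ((starRingEnd ℂ) (u n) * v n).re := by
  have h1 : Lmap hμ u v = (inner (𝕜 := ℂ) (W hμ u) v).re := rfl
  rw [h1, lp.inner_eq_tsum, Complex.re_tsum (lp.summable_inner (𝕜 := ℂ) (W hμ u) v)]
  exact tsum_congr (fun n => Wterm hμ u v n)

/-- The deformed norm functional. -/
def Fq (μ : ℝ) (u : Seq2) : ℝ := ∑' n : ℤ, Real.log (1 + μ * ‖u n‖^2)

lemma log_summable {μ : ℝ} (hμ : 0 < μ) (u : Seq2) :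
    Summable (fun n : ℤ => Real.log (1 + μ * ‖u n‖^2)) := by
  refine ((sq_summable u).mul_left μ).of_nonneg_of_le (fun n => ?_) (fun n => ?_)
  · apply Real.log_nonneg
    nlinarith [sq_nonneg ‖u n‖]
  · have h1 : (0:ℝ) < 1 + μ * ‖u n‖^2 := by nlinarith [sq_nonneg ‖u n‖]
    have := Real.log_le_sub_one_of_pos h1
    linarith

lemma norm_add_sq'' (x y : ℂ) :
    ‖x+y‖^2 = ‖x‖^2 + 2*((starRingEnd ℂ) x * y).re + ‖y‖^2 := by
  have h := norm_add_sq (𝕜 := ℂ) x y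
  rwa [RCLike.inner_apply, mul_comm y] at h

lemma term_est {μ : ℝ} (hμ : 0 < μ) (u v : Seq2) (n : ℤ) :
    |Real.log (1 + μ * ‖(u+v) n‖^2) - Real.log (1 + μ * ‖u n‖^2)
      - (2*μ / (1+μ*‖u n‖^2)) * ((starRingEnd ℂ) (u n) * v n).re|
    ≤ (μ^2*(2*‖u‖+‖v‖)^2 + μ) * ‖v n‖^2 := by
  have hco : (u+v) n = u n + v n := by rw [lp.coeFn_add]; rfl
  rw [hco]
  set r : ℝ := ((starRingEnd ℂ) (u n) * v n).re with hr
  set b : ℝ := μ * ‖u n‖^2 with hbdef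
  have ha : 0 ≤ μ * ‖u n + v n‖^2 := by positivity
  have hb : 0 ≤ b := by positivity
  have hb1 : (1:ℝ) ≤ 1 + b := by linarith
  have hb0 : (0:ℝ) < 1 + b := by linarith
  have hab : μ * ‖u n + v n‖^2 - b = μ*(2*r + ‖v n‖^2) := by
    rw [hbdef, norm_add_sq'' (u n) (v n)]; ring
  have key := log_est ha hb
  rw [hab] at key
  have hsplit : (μ*(2*r + ‖v n‖^2))/(1+b)
      = (2*μ/(1+b))*r + μ*‖v n‖^2/(1+b) := by field_simp
  have hre : |r| ≤ ‖u‖ * ‖v n‖ := by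
    calc |r| ≤ ‖(starRingEnd ℂ) (u n) * v n‖ := Complex.abs_re_le_norm _
    _ = ‖u n‖ * ‖v n‖ := by
        rw [norm_mul, Complex.norm_conj]
    _ ≤ ‖u‖ * ‖v n‖ :=
        mul_le_mul_of_nonneg_right (lp.norm_apply_le_norm two_ne_zero u n) (norm_nonneg _)
  have hvn : ‖v n‖ ≤ ‖v‖ := lp.norm_apply_le_norm two_ne_zero v n
  have h2 : |μ*‖v n‖^2/(1+b)| ≤ μ*‖v n‖^2 := by
    rw [_root_.abs_of_nonneg (by positivity)]
    exact div_le_self (by positivity) hb1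
  have h3 : (μ*(2*r + ‖v n‖^2))^2 ≤ μ^2*(2*‖u‖+‖v‖)^2 * ‖v n‖^2 := by
    have hvv : ‖v n‖^2 ≤ ‖v‖*‖v n‖ := by nlinarith [norm_nonneg (v n)]
    have habs := abs_le.mp hre
    have h4 : |2*r + ‖v n‖^2| ≤ (2*‖u‖+‖v‖)*‖v n‖ := by
      rw [abs_le]
      constructor
      · nlinarith [sq_nonneg ‖v n‖]
      · nlinarith
    calc (μ*(2*r+‖v n‖^2))^2 = μ^2 * |2*r+‖v n‖^2|^2 := by rw [_root_.sq_abs]; ring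
    _ ≤ μ^2 * ((2*‖u‖+‖v‖)*‖v n‖)^2 := by
        have h5 := pow_le_pow_left₀ (abs_nonneg _) h4 2
        have h6 : (0:ℝ) ≤ μ^2 := sq_nonneg μ
        nlinarith
    _ = μ^2*(2*‖u‖+‖v‖)^2 * ‖v n‖^2 := by ring
  have hid : Real.log (1 + μ * ‖u n + v n‖^2) - Real.log (1 + b) - (2*μ/(1+b))*r
      = (Real.log (1 + μ * ‖u n + v n‖^2) - Real.log (1 + b)
          - (μ*(2*r + ‖v n‖^2))/(1+b)) + μ*‖v n‖^2/(1+b) := by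
    rw [hsplit]; ring
  rw [hid]
  calc |_ + μ*‖v n‖^2/(1+b)| ≤ (μ*(2*r + ‖v n‖^2))^2 + |μ*‖v n‖^2/(1+b)| := by
        refine (abs_add_le _ _).trans ?_
        exact add_le_add key (le_refl _)
  _ ≤ μ^2*(2*‖u‖+‖v‖)^2 * ‖v n‖^2 + μ*‖v n‖^2 := add_le_add h3 h2
  _ = (μ^2*(2*‖u‖+‖v‖)^2 + μ) * ‖v n‖^2 := by ring

lemma abs_tsum_le {f : ℤ → ℝ} (h : Summable fun n => |f n|) :
    |∑' n : ℤ, f n| ≤ ∑' n : ℤ, |f n| := by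
  simpa [Real.norm_eq_abs] using
    norm_tsum_le_tsum_norm (f := f) (by simpa [Real.norm_eq_abs] using h)

lemma Fq_est {μ : ℝ} (hμ : 0 < μ) (u v : Seq2) :
    |Fq μ (u+v) - Fq μ u - Lmap hμ u v| ≤ (μ^2*(2*‖u‖+‖v‖)^2 + μ) * ‖v‖^2 := by
  have s1 := log_summable hμ (u+v)
  have s2 := log_summable hμ u
  have s3 := summable_Lterm hμ u v
  rw [show Fq μ (u+v) = ∑' n : ℤ, Real.log (1 + μ * ‖(u+v) n‖^2) from rfl,
    show Fq μ u = ∑' n : ℤ, Real.log (1 + μ * ‖u n‖^2) from rfl,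
    Lmap_apply, ← Summable.tsum_sub s1 s2, ← Summable.tsum_sub (s1.sub s2) s3]
  have sb : Summable (fun n : ℤ => (μ^2*(2*‖u‖+‖v‖)^2 + μ) * ‖v n‖^2) :=
    (sq_summable v).mul_left _
  have sabs : Summable (fun n : ℤ =>
      |Real.log (1 + μ * ‖(u+v) n‖^2) - Real.log (1 + μ * ‖u n‖^2)
        - (2*μ / (1+μ*‖u n‖^2)) * ((starRingEnd ℂ) (u n) * v n).re|) :=
    sb.of_nonneg_of_le (fun n => abs_nonneg _) (fun n => term_est hμ u v n)
  calc |∑' n : ℤ, (Real.log (1 + μ * ‖(u+v) n‖^2) - Real.log (1 + μ * ‖u n‖^2)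
        - (2*μ / (1+μ*‖u n‖^2)) * ((starRingEnd ℂ) (u n) * v n).re)|
      ≤ ∑' n : ℤ, |Real.log (1 + μ * ‖(u+v) n‖^2) - Real.log (1 + μ * ‖u n‖^2)
        - (2*μ / (1+μ*‖u n‖^2)) * ((starRingEnd ℂ) (u n) * v n).re| := abs_tsum_le sabs
  _ ≤ ∑' n : ℤ, (μ^2*(2*‖u‖+‖v‖)^2 + μ) * ‖v n‖^2 :=
        Summable.tsum_le_tsum (fun n => term_est hμ u v n) sabs sb
  _ = (μ^2*(2*‖u‖+‖v‖)^2 + μ) * ∑' n : ℤ, ‖v n‖^2 := tsum_mul_left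
  _ = (μ^2*(2*‖u‖+‖v‖)^2 + μ) * ‖v‖^2 := by rw [norm_sq_eq]

lemma Fq_hasFDeriv {μ : ℝ} (hμ : 0 < μ) (u : Seq2) : HasFDerivAt (Fq μ) (Lmap hμ u) u := by
  rw [hasFDerivAt_iff_isLittleO_nhds_zero]
  have h1 : (fun v : Seq2 => Fq μ (u+v) - Fq μ u - Lmap hμ u v)
      =O[nhds 0] (fun v : Seq2 => ‖v‖^2) := by
    apply Asymptotics.IsBigO.of_bound (μ^2*(2*‖u‖+1)^2 + μ)
    filter_upwards [Metric.ball_mem_nhds (0:Seq2) one_pos] with v hv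
    have hv1 : ‖v‖ ≤ 1 := by
      rw [Metric.mem_ball, dist_zero_right] at hv
      exact hv.le
    have hu0 : (0:ℝ) ≤ ‖u‖ := norm_nonneg u
    have hv0 : (0:ℝ) ≤ ‖v‖ := norm_nonneg v
    calc ‖Fq μ (u+v) - Fq μ u - Lmap hμ u v‖
        ≤ (μ^2*(2*‖u‖+‖v‖)^2+μ)*‖v‖^2 := by
          rw [Real.norm_eq_abs]; exact Fq_est hμ u v
    _ ≤ (μ^2*(2*‖u‖+1)^2+μ)*‖v‖^2 := by
          have hAB : (2*‖u‖+‖v‖)^2 ≤ (2*‖u‖+1)^2 := by nlinarith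
          have := mul_le_mul_of_nonneg_left hAB (sq_nonneg μ)
          nlinarith [sq_nonneg ‖v‖]
    _ = (μ^2*(2*‖u‖+1)^2+μ)*‖(‖v‖^2 : ℝ)‖ := by
          rw [Real.norm_eq_abs, _root_.abs_of_nonneg (by positivity)]
  exact h1.trans_isLittleO (Asymptotics.isLittleO_norm_pow_id one_lt_two)

lemma im_conj_swap (a b : ℂ) :
    ((starRingEnd ℂ) a * b).im = -(((starRingEnd ℂ) b) * a).im := by
  calc ((starRingEnd ℂ) a * b).im
      = -((starRingEnd ℂ) ((starRingEnd ℂ) a * b)).im := by rw [Complex.conj_im]; ring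
  _ = -(((starRingEnd ℂ) b) * a).im := by rw [map_mul, Complex.conj_conj, mul_comm]

lemma summable_h {μ : ℝ} (hμ : 0 < μ) (u : Seq2) :
    Summable (fun n : ℤ => 2*μ*((starRingEnd ℂ) (u n) * u (n+1)).im) := by
  have hsh : Summable (fun n : ℤ => ‖u (n+1)‖^2) := by
    have := (Equiv.addRight (1:ℤ)).summable_iff.mpr (sq_summable u)
    exact this
  have hg : Summable (fun n : ℤ => μ * (‖u n‖^2 + ‖u (n+1)‖^2)) :=
    ((sq_summable u).add hsh).mul_left μ
  refine Summable.of_norm_bounded hg (fun n => ?_)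
  rw [Real.norm_eq_abs]
  have h1 : |((starRingEnd ℂ) (u n) * u (n+1)).im| ≤ ‖u n‖ * ‖u (n+1)‖ := by
    calc |((starRingEnd ℂ) (u n) * u (n+1)).im|
        ≤ ‖(starRingEnd ℂ) (u n) * u (n+1)‖ := Complex.abs_im_le_norm _
    _ = ‖u n‖ * ‖u (n+1)‖ := by rw [norm_mul, Complex.norm_conj]
  have h2 : |2*μ*((starRingEnd ℂ) (u n) * u (n+1)).im| ≤ 2*μ*(‖u n‖ * ‖u (n+1)‖) := by
    rw [abs_mul, _root_.abs_of_nonneg (by positivity : (0:ℝ) ≤ 2*μ)]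
    exact mul_le_mul_of_nonneg_left h1 (by positivity)
  refine h2.trans ?_
  nlinarith [sq_nonneg (‖u n‖ - ‖u (n+1)‖)]

lemma Lmap_eq_zero {μ : ℝ} (hμ : 0 < μ) (u v : Seq2)
    (heq : ∀ n : ℤ, Complex.I * v n =
      (u (n+1) - 2 * u n + u (n-1))
        + (μ:ℂ) * ((‖u n‖)^2 : ℝ) * (u (n+1) + u (n-1))) :
    Lmap hμ u v = 0 := by
  set h : ℤ → ℝ := fun n => 2*μ*((starRingEnd ℂ) (u n) * u (n+1)).im with hh
  have hsum : Summable h := summable_h hμ u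
  have hsum' : Summable (fun n : ℤ => h (n-1)) := by
    have := (Equiv.subRight (1:ℤ)).summable_iff.mpr hsum
    exact this
  have hterm : ∀ n : ℤ, (2*μ / (1+μ*‖u n‖^2)) * ((starRingEnd ℂ) (u n) * v n).re
      = h n - h (n-1) := by
    intro n
    have hb0 : (0:ℝ) < 1 + μ*‖u n‖^2 := by positivity
    have hv : v n = -Complex.I * ((((1+μ*‖u n‖^2 : ℝ)) : ℂ) * (u (n+1) + u (n-1)) - 2 * u n) := by
      have h0 := heq n
      have habs : ((‖u n‖)^2 : ℝ) = (‖u n‖^2 : ℝ) := rfl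
      have h1 : Complex.I * v n
          = (((1+μ*‖u n‖^2 : ℝ)) : ℂ) * (u (n+1) + u (n-1)) - 2 * u n := by
        rw [h0, habs]
        push_cast
        ring
      calc v n = -Complex.I * (Complex.I * v n) := by
            rw [← mul_assoc]
            simp [Complex.I_mul_I]
      _ = _ := by rw [h1]
    have hcu : (starRingEnd ℂ) (u n) * u n = ((‖u n‖^2 : ℝ) : ℂ) := by
      rw [← Complex.normSq_eq_conj_mul_self, ← Complex.sq_norm]
    have hcr : (starRingEnd ℂ) (u n) * v n
        = -Complex.I * ((((1+μ*‖u n‖^2 : ℝ)) : ℂ)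
            * ((starRingEnd ℂ) (u n) * (u (n+1) + u (n-1))) - 2 * ((‖u n‖^2 : ℝ) : ℂ)) := by
      rw [hv, ← hcu]
      ring
    have hre : ((starRingEnd ℂ) (u n) * v n).re
        = (1+μ*‖u n‖^2) * (((starRingEnd ℂ) (u n) * u (n+1)).im
            + ((starRingEnd ℂ) (u n) * u (n-1)).im) := by
      have hneg : ∀ w : ℂ, (-Complex.I * w).re = w.im := by
        intro w; simp
      rw [hcr, hneg, Complex.sub_im, Complex.im_ofReal_mul, mul_add,
        Complex.mul_im (2 : ℂ)]
      simp [← Complex.ofReal_pow]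
    rw [hre]
    have hcancel : (2*μ / (1+μ*‖u n‖^2)) * ((1+μ*‖u n‖^2) * (((starRingEnd ℂ) (u n) * u (n+1)).im
            + ((starRingEnd ℂ) (u n) * u (n-1)).im))
        = 2*μ*(((starRingEnd ℂ) (u n) * u (n+1)).im + ((starRingEnd ℂ) (u n) * u (n-1)).im) := by
      field_simp
    rw [hcancel]
    have hn1 : ((n:ℤ)-1)+1 = n := by ring
    simp only [hh, hn1]
    rw [im_conj_swap (u n) (u (n-1))]
    ring
  rw [Lmap_apply, tsum_congr hterm, Summable.tsum_sub hsum hsum']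
  have hshift : ∑' n : ℤ, h (n-1) = ∑' n : ℤ, h n := by
    have := (Equiv.subRight (1:ℤ)).tsum_eq h
    simpa using this
  rw [hshift, sub_self]

end ALConserved

/-- Conservation of the deformed norm `P_μ(ψ(t)) = ∑_{n∈ℤ} ln(1 + μ|ψ_n(t)|²)`
along solutions of the AL lattice. -/
theorem al_deformed_norm_conserved (μ Tf : ℝ) (hμ : 0 < μ)
    (ψ : ℝ → Seq2) (hψ : IsALSolution μ Tf ψ) :
    ∀ t ∈ Icc (0:ℝ) Tf,
      (∑' n : ℤ, Real.log (1 + μ * (‖ψ t n‖)^2))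
        = ∑' n : ℤ, Real.log (1 + μ * (‖ψ 0 n‖)^2) := by
  obtain ⟨ψdot, hcont, hsol⟩ := hψ
  have hg : ∀ t ∈ Icc (0:ℝ) Tf,
      HasDerivWithinAt (fun s => ALConserved.Fq μ (ψ s)) 0 (Icc 0 Tf) t := by
    intro t ht
    have h1 := (ALConserved.Fq_hasFDeriv hμ (ψ t)).comp_hasDerivWithinAt t (hsol t ht).1
    have h2 : ALConserved.Lmap hμ (ψ t) (ψdot t) = 0 :=
      ALConserved.Lmap_eq_zero hμ (ψ t) (ψdot t) (hsol t ht).2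
    rw [h2] at h1
    exact h1
  intro t ht
  have h0 : (0:ℝ) ∈ Icc (0:ℝ) Tf := ⟨le_refl 0, le_trans ht.1 ht.2⟩
  have hb := Convex.norm_image_sub_le_of_norm_hasDerivWithin_le
    (f' := fun _ => (0:ℝ)) (C := 0) hg (fun x hx => by simp) (convex_Icc 0 Tf) h0 ht
  have heq : ALConserved.Fq μ (ψ t) = ALConserved.Fq μ (ψ 0) := by
    rw [zero_mul] at hb
    exact sub_eq_zero.mp (norm_le_zero_iff.mp hb)
  simpa [ALConserved.Fq] using heq
end
end

section
/- Let μ > 0, γ > 0, σ > 0. Let ψ be a solution of the AL lattice on [0,T_f] and φ a solution of the DNLS lattice with power nonlinearity on [0,T_f], and set y(t) = ψ(t) − φ(t). Then for every t ∈ [0,T_f], ‖y(t)‖_{ℓ²} ≤ ‖y(0)‖_{ℓ²} + ∫₀ᵗ ( 2μ ‖ψ(s)‖³_{ℓ²} + γ ‖φ(s)‖^{2σ+1}_{ℓ²} ) ds. -/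
noncomputable section

open Set

open scoped ENNReal
namespace ALDNLSAux

lemma two_conj : (2:ℝ≥0∞).toReal.HolderConjugate (2:ℝ≥0∞).toReal := by
  rw [ENNReal.toReal_ofNat]
  constructor <;> norm_num

lemma memℓp_shift (f : Seq2) (k : ℤ) : Memℓp (fun n : ℤ => (f (n + k) : ℂ)) 2 := by
  apply memℓp_gen
  have h := (lp.memℓp f).summable (by norm_num : 0 < (2:ℝ≥0∞).toReal)
  exact h.comp_injective (add_left_injective k)

/-- shift of an ℓ² sequence -/
def shiftf (f : Seq2) (k : ℤ) : Seq2 := ⟨fun n => f (n + k), memℓp_shift f k⟩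

@[simp] lemma shiftf_apply (f : Seq2) (k n : ℤ) : shiftf f k n = f (n + k) := rfl

lemma norm_shiftf (f : Seq2) (k : ℤ) : ‖shiftf f k‖ = ‖f‖ := by
  rw [lp.norm_eq_tsum_rpow (by norm_num) (shiftf f k), lp.norm_eq_tsum_rpow (by norm_num) f]
  congr 1
  exact (Equiv.addRight k).tsum_eq (fun n => ‖f n‖ ^ (2:ℝ≥0∞).toReal)

lemma cs (f g : Seq2) : ∑' n, ‖f n‖ * ‖g n‖ ≤ ‖f‖ * ‖g‖ :=
  lp.tsum_mul_le_mul_norm' two_conj f g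

lemma cs_summable (f g : Seq2) : Summable fun n => ‖f n‖ * ‖g n‖ :=
  lp.summable_mul two_conj f g

lemma aux_abs (a b : ℂ) : |((starRingEnd ℂ) a * (-Complex.I) * b).re| ≤ ‖a‖ * ‖b‖ := by
  have h1 : |((starRingEnd ℂ) a * (-Complex.I) * b).re| ≤ ‖(starRingEnd ℂ) a * (-Complex.I) * b‖ := by
    exact Complex.abs_re_le_norm _
  refine h1.trans ?_
  rw [norm_mul, norm_mul, RCLike.norm_conj, norm_neg, Complex.norm_I]
  simp

end ALDNLSAux

open ALDNLSAux in
set_option maxHeartbeats 2000000 in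
/-- Key estimate: `Re ⟪y, ẏ⟫ ≤ ‖y‖ (2μ‖ψ‖³ + γ‖φ‖^{2σ+1})`. -/
lemma re_inner_le_bound (μ γ σ : ℝ) (hμ : 0 ≤ μ) (hγ : 0 ≤ γ) (hσ : 0 < σ)
    (ψt φt y yd : Seq2)
    (hE : ∀ n : ℤ, Complex.I * yd n =
      (y (n+1) - 2 * y n + y (n-1))
        + ((μ : ℂ) * ((‖ψt n‖)^2 : ℝ) * (ψt (n+1) + ψt (n-1))
            - (γ : ℂ) * ((‖φt n‖) ^ (2*σ) : ℝ) * φt n)) :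
    (@inner ℂ _ _ y yd).re ≤ ‖y‖ * (2 * μ * ‖ψt‖^3 + γ * ‖φt‖ ^ (2*σ+1)) := by
  classical
  set N : ℤ → ℂ := fun n =>
    (μ : ℂ) * ((‖ψt n‖)^2 : ℝ) * (ψt (n+1) + ψt (n-1))
      - (γ : ℂ) * ((‖φt n‖) ^ (2*σ) : ℝ) * φt n with hN
  have hyd : ∀ n : ℤ, (yd n : ℂ) = -Complex.I * ((y (n+1) - 2 * y n + y (n-1)) + N n) := by
    intro n
    have h := hE n
    simp only [hN]
    linear_combination -Complex.I * h + (yd n : ℂ) * Complex.I_sq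
  set A : ℤ → ℝ := fun n => ((starRingEnd ℂ) (y n) * (-Complex.I) * y (n+1)).re with hA
  set Bb : ℤ → ℝ := fun n => ((starRingEnd ℂ) (y n) * (-Complex.I) * y (n-1)).re with hBb
  set M : ℤ → ℝ := fun n => ((starRingEnd ℂ) (y n) * (-Complex.I) * N n).re with hM
  have sA : Summable A := by
    refine Summable.of_norm_bounded (cs_summable y (shiftf y 1)) fun n => ?_
    simp only [hA, Real.norm_eq_abs, shiftf_apply]
    exact aux_abs (y n) (y (n+1))
  have sB : Summable Bb := by
    refine Summable.of_norm_bounded (cs_summable y (shiftf y (-1))) fun n => ?_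
    simp only [hBb, Real.norm_eq_abs, shiftf_apply, ← sub_eq_add_neg]
    exact aux_abs (y n) (y (n-1))
  have hψb : ∀ n, ‖ψt n‖ ≤ ‖ψt‖ := fun n => lp.norm_apply_le_norm (by norm_num) ψt n
  have hφb : ∀ n, ‖φt n‖ ≤ ‖φt‖ := fun n => lp.norm_apply_le_norm (by norm_num) φt n
  set W : ℤ → ℝ := fun n =>
      μ * ‖ψt‖^2 * (‖y n‖ * ‖ψt (n+1)‖) + μ * ‖ψt‖^2 * (‖y n‖ * ‖ψt (n-1)‖)
        + γ * ‖φt‖ ^ (2*σ) * (‖y n‖ * ‖φt n‖) with hW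
  have hNb : ∀ n, ‖y n‖ * ‖N n‖ ≤ W n := by
    intro n
    have h1 : ‖N n‖ ≤ μ * ‖ψt n‖^2 * (‖ψt (n+1)‖ + ‖ψt (n-1)‖)
        + γ * ‖φt n‖ ^ (2*σ) * ‖φt n‖ := by
      simp only [hN]
      refine (norm_sub_le _ _).trans ?_
      rw [norm_mul, norm_mul, norm_mul, norm_mul]
      have e1 : ‖((μ:ℝ):ℂ)‖ = μ := by
        rw [Complex.norm_real, Real.norm_eq_abs, abs_of_nonneg hμ]
      have e2 : ‖(((‖ψt n‖)^2 : ℝ) : ℂ)‖ = ‖ψt n‖^2 := by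
        rw [Complex.norm_real, Real.norm_eq_abs, abs_of_nonneg (by positivity)]
      have e3 : ‖((γ:ℝ):ℂ)‖ = γ := by
        rw [Complex.norm_real, Real.norm_eq_abs, abs_of_nonneg hγ]
      have e4 : ‖(((‖φt n‖) ^ (2*σ) : ℝ) : ℂ)‖ = ‖φt n‖ ^ (2*σ) := by
        rw [Complex.norm_real, Real.norm_eq_abs,
          abs_of_nonneg (Real.rpow_nonneg (norm_nonneg _) _)]
      rw [e1, e2, e3, e4]
      have hb := mul_le_mul_of_nonneg_left (norm_add_le (ψt (n+1)) (ψt (n-1)))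
        (mul_nonneg hμ (by positivity : (0:ℝ) ≤ ‖ψt n‖^2))
      rw [mul_assoc, mul_assoc] at hb ⊢
      linarith
    have a1 : ‖ψt n‖^2 ≤ ‖ψt‖^2 := pow_le_pow_left₀ (norm_nonneg _) (hψb n) 2
    have a2 : ‖φt n‖ ^ (2*σ) ≤ ‖φt‖ ^ (2*σ) :=
      Real.rpow_le_rpow (norm_nonneg _) (hφb n) (by positivity)
    have b1 : (0:ℝ) ≤ ‖ψt (n+1)‖ + ‖ψt (n-1)‖ := by positivity
    have c1 := mul_le_mul_of_nonneg_right (mul_le_mul_of_nonneg_left a1 hμ) b1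
    have c2 := mul_le_mul_of_nonneg_right (mul_le_mul_of_nonneg_left a2 hγ) (norm_nonneg (φt n))
    have h2 : ‖N n‖ ≤ μ * ‖ψt‖^2 * (‖ψt (n+1)‖ + ‖ψt (n-1)‖)
        + γ * ‖φt‖ ^ (2*σ) * ‖φt n‖ := by linarith
    have h3 := mul_le_mul_of_nonneg_left h2 (norm_nonneg (y n))
    refine h3.trans (le_of_eq ?_)
    simp only [hW]; ring
  have w1 : Summable fun n => μ*‖ψt‖^2 * (‖y n‖ * ‖ψt (n+1)‖) := by
    simpa using (cs_summable y (shiftf ψt 1)).mul_left (μ*‖ψt‖^2)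
  have w2 : Summable fun n => μ*‖ψt‖^2 * (‖y n‖ * ‖ψt (n-1)‖) := by
    have := (cs_summable y (shiftf ψt (-1))).mul_left (μ*‖ψt‖^2)
    simpa [← sub_eq_add_neg] using this
  have w3 : Summable fun n => γ*‖φt‖^(2*σ) * (‖y n‖ * ‖φt n‖) :=
    (cs_summable y φt).mul_left _
  have SW : Summable W := by
    simp only [hW]
    exact (w1.add w2).add w3
  have SN : Summable fun n => ‖y n‖ * ‖N n‖ :=
    Summable.of_nonneg_of_le (fun n => by positivity) hNb SW
  have sM : Summable M := by
    refine Summable.of_norm_bounded SN fun n => ?_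
    simp only [hM, Real.norm_eq_abs]
    exact aux_abs (y n) (N n)
  have hterm : ∀ n : ℤ, (@inner ℂ _ _ (y n) (yd n)).re = A n + Bb n + M n := by
    intro n
    rw [RCLike.inner_apply', hyd n]
    have hz : (starRingEnd ℂ) (y n) * y n = ((Complex.normSq (y n) : ℝ) : ℂ) := by
      rw [mul_comm, Complex.mul_conj]
    have expand : (starRingEnd ℂ) (y n) * (-Complex.I * ((y (n+1) - 2 * y n + y (n-1)) + N n))
        = (starRingEnd ℂ) (y n) * (-Complex.I) * y (n+1)
          + (starRingEnd ℂ) (y n) * (-Complex.I) * y (n-1)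
          + (starRingEnd ℂ) (y n) * (-Complex.I) * N n
          + (2 * Complex.I) * ((starRingEnd ℂ) (y n) * y n) := by ring
    rw [expand, hz]
    have hzero : ((2 * Complex.I) * ((Complex.normSq (y n) : ℝ) : ℂ)).re = 0 := by simp
    simp only [Complex.add_re, hzero, add_zero, hA, hBb, hM]
  have hre : (@inner ℂ _ _ y yd).re = ∑' n, (A n + Bb n + M n) := by
    rw [lp.inner_eq_tsum, Complex.re_tsum (lp.summable_inner y yd)]
    exact tsum_congr hterm
  have hAB : (∑' n, Bb n) = - ∑' n, A n := by
    have h1 : ∑' n, Bb (n + 1) = ∑' n, Bb n := (Equiv.addRight (1:ℤ)).tsum_eq Bb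
    have h2 : ∀ n : ℤ, Bb (n+1) = - A n := by
      intro n
      simp only [hBb, hA]
      have e : (n + 1 - 1 : ℤ) = n := by ring
      rw [e]
      have hconj : (starRingEnd ℂ) (y (n+1)) * (-Complex.I) * y n
          = -((starRingEnd ℂ) ((starRingEnd ℂ) (y n) * (-Complex.I) * y (n+1))) := by
        simp only [map_mul, Complex.conj_conj, map_neg, Complex.conj_I]
        ring
      rw [hconj, Complex.neg_re, Complex.conj_re]
    calc (∑' n, Bb n) = ∑' n, Bb (n+1) := h1.symm
      _ = ∑' n, (- A n) := tsum_congr h2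
      _ = - ∑' n, A n := by rw [tsum_neg]
  have hφpow : ‖φt‖ ^ (2*σ) * ‖φt‖ = ‖φt‖ ^ (2*σ+1) := by
    rcases eq_or_ne ‖φt‖ 0 with h|h
    · rw [h, Real.zero_rpow (by positivity : (0:ℝ) < 2*σ).ne',
        Real.zero_rpow (by positivity : (0:ℝ) < 2*σ+1).ne']
      ring
    · rw [Real.rpow_add_one h]
  have hMle : ∑' n, M n ≤ ‖y‖ * (2*μ*‖ψt‖^3 + γ*‖φt‖^(2*σ+1)) := by
    have s1 : ∑' n, M n ≤ ∑' n, W n := by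
      refine Summable.tsum_le_tsum (fun n => ?_) sM SW
      refine (le_abs_self _).trans (le_trans ?_ (hNb n))
      simp only [hM]
      exact aux_abs (y n) (N n)
    have t1 : ∑' n, (‖y n‖ * ‖ψt (n+1)‖) ≤ ‖y‖ * ‖ψt‖ := by
      simpa [norm_shiftf] using cs y (shiftf ψt 1)
    have t2 : ∑' n, (‖y n‖ * ‖ψt (n-1)‖) ≤ ‖y‖ * ‖ψt‖ := by
      have := cs y (shiftf ψt (-1))
      rw [norm_shiftf] at this
      simpa [← sub_eq_add_neg] using this
    have t3 : ∑' n, (‖y n‖ * ‖φt n‖) ≤ ‖y‖ * ‖φt‖ := cs y φt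
    have s2 : ∑' n, W n = μ*‖ψt‖^2 * (∑' n, ‖y n‖ * ‖ψt (n+1)‖)
        + μ*‖ψt‖^2 * (∑' n, ‖y n‖ * ‖ψt (n-1)‖)
        + γ*‖φt‖^(2*σ) * (∑' n, ‖y n‖ * ‖φt n‖) := by
      simp only [hW]
      rw [Summable.tsum_add (w1.add w2) w3, Summable.tsum_add w1 w2, tsum_mul_left, tsum_mul_left, tsum_mul_left]
    have c1 := mul_le_mul_of_nonneg_left t1
      (mul_nonneg hμ (by positivity : (0:ℝ) ≤ ‖ψt‖^2))
    have c2 := mul_le_mul_of_nonneg_left t2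
      (mul_nonneg hμ (by positivity : (0:ℝ) ≤ ‖ψt‖^2))
    have c3 := mul_le_mul_of_nonneg_left t3
      (mul_nonneg hγ (Real.rpow_nonneg (norm_nonneg φt) (2*σ)))
    have hfin : μ*‖ψt‖^2*(‖y‖*‖ψt‖) + μ*‖ψt‖^2*(‖y‖*‖ψt‖) + γ*‖φt‖^(2*σ)*(‖y‖*‖φt‖)
        = ‖y‖*(2*μ*‖ψt‖^3 + γ*‖φt‖^(2*σ+1)) := by
      rw [← hφpow]; ring
    rw [s2] at s1
    linarith
  have hsum1 : ∑' n, (A n + Bb n + M n) = (∑' n, (A n + Bb n)) + ∑' n, M n :=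
    Summable.tsum_add (sA.add sB) sM
  have hsum2 : ∑' n, (A n + Bb n) = (∑' n, A n) + ∑' n, Bb n := Summable.tsum_add sA sB
  rw [hre, hsum1, hsum2, hAB]
  simpa using hMle

/-- Integral inequality for the distance of an AL solution ψ and a DNLS solution φ:
`‖y(t)‖ ≤ ‖y(0)‖ + ∫₀ᵗ (2μ‖ψ(s)‖³ + γ‖φ(s)‖^{2σ+1}) ds` with `y = ψ − φ`. -/
theorem al_dnls_distance_integral_inequality (μ γ σ Tf : ℝ)
    (hμ : 0 < μ) (hγ : 0 < γ) (hσ : 0 < σ)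
    (ψ φ : ℝ → Seq2) (hψ : IsALSolution μ Tf ψ) (hφ : IsDNLSSolution γ σ Tf φ) :
    ∀ t ∈ Icc (0:ℝ) Tf,
      ‖ψ t - φ t‖ ≤ ‖ψ 0 - φ 0‖
        + ∫ s in (0:ℝ)..t, (2 * μ * ‖ψ s‖^3 + γ * ‖φ s‖ ^ (2*σ+1)) := by
  obtain ⟨ψd, hψdc, hψsol⟩ := hψ
  obtain ⟨φd, hφdc, hφsol⟩ := hφ
  intro t ht
  have hTf : (0:ℝ) ≤ Tf := le_trans ht.1 ht.2
  have hψc : ContinuousOn ψ (Icc 0 Tf) := fun s hs => ((hψsol s hs).1).continuousWithinAt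
  have hφc : ContinuousOn φ (Icc 0 Tf) := fun s hs => ((hφsol s hs).1).continuousWithinAt
  set p : ℝ → ℝ := fun s => max 0 (min s Tf) with hp
  have hpc : Continuous p := continuous_const.max (continuous_id.min continuous_const)
  have hpmem : ∀ s, p s ∈ Icc (0:ℝ) Tf := fun s =>
    ⟨le_max_left _ _, max_le hTf (min_le_right _ _)⟩
  have hpeq : ∀ s ∈ Icc (0:ℝ) Tf, p s = s := by
    intro s hs
    simp only [hp]
    rw [min_eq_left hs.2, max_eq_right hs.1]
  set gc : ℝ → ℝ := fun s => 2*μ*‖ψ (p s)‖^3 + γ*‖φ (p s)‖^(2*σ+1) with hgc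
  have h1c : Continuous fun s => ψ (p s) := hψc.comp_continuous hpc hpmem
  have h2c : Continuous fun s => φ (p s) := hφc.comp_continuous hpc hpmem
  have hgcc : Continuous gc := by
    refine (continuous_const.mul ((h1c.norm).pow 3)).add (continuous_const.mul ?_)
    exact (h2c.norm).rpow_const (fun s => Or.inr (by positivity))
  have hgcnn : ∀ s, 0 ≤ gc s := by
    intro s
    have h1 : (0:ℝ) ≤ 2*μ*‖ψ (p s)‖^3 :=
      mul_nonneg (by linarith : (0:ℝ) ≤ 2*μ) (by positivity)
    have h2 : (0:ℝ) ≤ γ*‖φ (p s)‖^(2*σ+1) :=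
      mul_nonneg hγ.le (Real.rpow_nonneg (norm_nonneg _) _)
    simp only [hgc]
    linarith
  have key : ∀ ε : ℝ, 0 < ε → ‖ψ t - φ t‖ ≤ ‖ψ 0 - φ 0‖
      + (∫ s in (0:ℝ)..t, (2 * μ * ‖ψ s‖^3 + γ * ‖φ s‖ ^ (2*σ+1))) + ε * (1 + t) := by
    intro ε hε
    set R : ℝ → ℝ := fun x => ‖ψ 0 - φ 0‖ + ε + ∫ s in (0:ℝ)..x, (gc s + ε) with hR
    have hgcε : Continuous fun s => gc s + ε := hgcc.add continuous_const
    have hRd : ∀ x : ℝ, HasDerivAt R (gc x + ε) x := by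
      intro x
      have h0 : HasDerivAt (fun u => ∫ s in (0:ℝ)..u, (gc s + ε)) (gc x + ε) x :=
        intervalIntegral.integral_hasDerivAt_right (hgcε.intervalIntegrable 0 x)
          (hgcε.stronglyMeasurableAtFilter _ _) hgcε.continuousAt
      simpa only [hR] using h0.const_add (‖ψ 0 - φ 0‖ + ε)
    have hRpos : ∀ x, 0 ≤ x → 0 < R x := by
      intro x hx
      have hint : 0 ≤ ∫ s in (0:ℝ)..x, (gc s + ε) :=
        intervalIntegral.integral_nonneg hx (fun u _ => add_nonneg (hgcnn u) hε.le)
      have hn := norm_nonneg (ψ 0 - φ 0)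
      simp only [hR]
      linarith
    have hVd : ∀ x ∈ Icc (0:ℝ) Tf, HasDerivWithinAt (fun s => ‖ψ s - φ s‖^2)
        (2 * (@inner ℂ _ _ (ψ x - φ x) (ψd x - φd x)).re) (Icc 0 Tf) x := by
      intro x hx
      have hyd : HasDerivWithinAt (fun s => ψ s - φ s) (ψd x - φd x) (Icc 0 Tf) x :=
        ((hψsol x hx).1).sub ((hφsol x hx).1)
      have h1 := HasDerivWithinAt.inner ℂ hyd hyd
      have h2 := (Complex.reCLM.hasFDerivAt).comp_hasDerivWithinAt x h1
      have h3 : ∀ s : ℝ, Complex.reCLM (@inner ℂ _ _ (ψ s - φ s) (ψ s - φ s))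
          = ‖ψ s - φ s‖^2 := by
        intro s
        have h := inner_self_eq_norm_sq (𝕜 := ℂ) (ψ s - φ s)
        simpa only [RCLike.re_to_complex, Complex.reCLM_apply] using h
      have h5 := h2.congr (fun s _ => (h3 s).symm) (h3 x).symm
      refine h5.congr_deriv ?_
      have h6 : @inner ℂ _ _ (ψd x - φd x) (ψ x - φ x)
          = (starRingEnd ℂ) (@inner ℂ _ _ (ψ x - φ x) (ψd x - φd x)) :=
        (inner_conj_symm _ _).symm
      rw [Complex.reCLM_apply, Complex.add_re, h6, Complex.conj_re]
      ring
    have hVc : ContinuousOn (fun s => ‖ψ s - φ s‖^2) (Icc 0 Tf) :=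
      fun x hx => (hVd x hx).continuousWithinAt
    have hmem : ∀ x ∈ Ico (0:ℝ) Tf, Icc (0:ℝ) Tf ∈ nhdsWithin x (Ici x) := by
      intro x hx
      have h1 : Icc x Tf ∈ nhdsWithin x (Ici x) := by
        rw [← Ici_inter_Iic]
        exact Filter.inter_mem self_mem_nhdsWithin
          (mem_nhdsWithin_of_mem_nhds (Iic_mem_nhds hx.2))
      exact Filter.mem_of_superset h1 (Icc_subset_Icc hx.1 le_rfl)
    have hVd' : ∀ x ∈ Ico (0:ℝ) Tf, HasDerivWithinAt (fun s => ‖ψ s - φ s‖^2)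
        (2 * (@inner ℂ _ _ (ψ x - φ x) (ψd x - φd x)).re) (Ici x) x :=
      fun x hx => (hVd x (Ico_subset_Icc_self hx)).mono_of_mem_nhdsWithin (hmem x hx)
    have hBd : ∀ x : ℝ, HasDerivAt (fun x => R x ^ 2) (2 * R x * (gc x + ε)) x := by
      intro x
      have h0 := (hRd x).pow 2
      refine h0.congr_deriv ?_
      push_cast
      ring
    have hV0 : ‖ψ 0 - φ 0‖^2 ≤ R 0 ^ 2 := by
      have hR0 : R 0 = ‖ψ 0 - φ 0‖ + ε := by
        simp only [hR, intervalIntegral.integral_same, add_zero]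
      rw [hR0]
      have hn := norm_nonneg (ψ 0 - φ 0)
      nlinarith
    have bound : ∀ x ∈ Ico (0:ℝ) Tf, ‖ψ x - φ x‖^2 = R x ^ 2 →
        2 * (@inner ℂ _ _ (ψ x - φ x) (ψd x - φd x)).re < 2 * R x * (gc x + ε) := by
      intro x hx hVx
      have hx' : x ∈ Icc (0:ℝ) Tf := Ico_subset_Icc_self hx
      have hRx : 0 < R x := hRpos x hx.1
      have hyx : ‖ψ x - φ x‖ = R x := by
        have h0 := congrArg Real.sqrt hVx
        rwa [Real.sqrt_sq (norm_nonneg _), Real.sqrt_sq hRx.le] at h0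
      have heq : ∀ n : ℤ, Complex.I * (ψd x - φd x) n =
          ((ψ x - φ x) (n+1) - 2 * (ψ x - φ x) n + (ψ x - φ x) (n-1))
            + ((μ : ℂ) * ((‖(ψ x) n‖)^2 : ℝ) * ((ψ x) (n+1) + (ψ x) (n-1))
                - (γ : ℂ) * ((‖(φ x) n‖) ^ (2*σ) : ℝ) * (φ x) n) := by
        intro n
        have h1 := (hψsol x hx').2 n
        have h2 := (hφsol x hx').2 n
        simp only [lp.coeFn_sub, Pi.sub_apply]
        linear_combination h1 - h2
      have hest := re_inner_le_bound μ γ σ hμ.le hγ.le hσ (ψ x) (φ x) (ψ x - φ x)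
        (ψd x - φd x) heq
      have hgcx : gc x = 2*μ*‖ψ x‖^3 + γ*‖φ x‖^(2*σ+1) := by
        simp only [hgc, hpeq x hx']
      have hle : (@inner ℂ _ _ (ψ x - φ x) (ψd x - φd x)).re
          ≤ R x * (2*μ*‖ψ x‖^3 + γ*‖φ x‖^(2*σ+1)) := by
        rw [← hyx]
        exact hest
      rw [hgcx]
      nlinarith [mul_pos hRx hε]
    have main := image_le_of_deriv_right_lt_deriv_boundary hVc hVd' hV0 hBd bound ht
    have hyt : ‖ψ t - φ t‖ ≤ R t := by
      have h0 := Real.sqrt_le_sqrt main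
      rwa [Real.sqrt_sq (norm_nonneg _), Real.sqrt_sq (hRpos t ht.1).le] at h0
    have hsplit : (∫ s in (0:ℝ)..t, (gc s + ε)) = (∫ s in (0:ℝ)..t, gc s) + ε * t := by
      rw [intervalIntegral.integral_add (hgcc.intervalIntegrable 0 t) intervalIntegrable_const,
        intervalIntegral.integral_const]
      simp only [smul_eq_mul, sub_zero]
      ring
    have hcongr : (∫ s in (0:ℝ)..t, gc s)
        = ∫ s in (0:ℝ)..t, (2 * μ * ‖ψ s‖^3 + γ * ‖φ s‖ ^ (2*σ+1)) := by
      apply intervalIntegral.integral_congr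
      intro s hs
      rw [uIcc_of_le ht.1] at hs
      have hs' : s ∈ Icc (0:ℝ) Tf := ⟨hs.1, hs.2.trans ht.2⟩
      simp only [hgc, hpeq s hs']
    simp only [hR] at hyt
    rw [hsplit, hcongr] at hyt
    linarith
  have h1t : (0:ℝ) < 1 + t := by linarith [ht.1]
  refine le_of_forall_pos_le_add ?_
  intro δ hδ
  have hk := key (δ/(1+t)) (by positivity)
  have hc : δ/(1+t) * (1+t) = δ := div_mul_cancel₀ δ h1t.ne'
  linarith
end
end
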